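/- arXiv:2405.15354 — 3 statements merged into one kernel-verified Lean document; each statement's English description precedes it below -/
import Mathlib

section
/- Let $R=K[x_1,\ldots,x_n,y_1,\ldots,y_n]$ with the lexicographic order induced by $x_1>\cdots>x_n>y_1>\cdots>y_n$, let $G$ be a simple graph on $[n]$ with binomial edge ideal $J_G$, and let $f$ be a homogeneous polynomial of degree $m$ with $(J_G:f)=P$ for some minimal prime $P$ of $J_G$. Then there exists a homogeneous polynomial $g$ of degree $m$ such that the leading monomial of $g$ does not lie in the initial ideal of $J_G$ and $(J_G:g)=P$. -/
open MvPolynomial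

set_option synthInstance.maxHeartbeats 1000000

namespace Paper

noncomputable section

variable (K : Type) [Field K]

/-- The v-number of a graded ideal `I`: the least `d` such that there is a homogeneous
polynomial `f` of degree `d` with `(I : f)` an associated prime of `R/I`. -/
def vNumber {σ : Type} (I : Ideal (MvPolynomial σ K)) : ℕ :=
  sInf {d : ℕ | ∃ f : MvPolynomial σ K, f.IsHomogeneous d ∧
    IsAssociatedPrime (Submodule.colon I (Ideal.span {f})) (MvPolynomial σ K ⧸ I)}

/-- The local v-number of `I` at a prime `P`. -/
def vLocal {σ : Type} (I P : Ideal (MvPolynomial σ K)) : ℕ :=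
  sInf {d : ℕ | ∃ f : MvPolynomial σ K, f.IsHomogeneous d ∧
    Submodule.colon I (Ideal.span {f}) = P}

/-- The edge binomial `f_{ij} = x_i y_j - x_j y_i`. -/
def bedge {V : Type} (i j : V) : MvPolynomial (V ⊕ V) K :=
  X (Sum.inl i) * X (Sum.inr j) - X (Sum.inl j) * X (Sum.inr i)

/-- The binomial edge ideal of a graph `G`. -/
def beIdeal {V : Type} (G : SimpleGraph V) : Ideal (MvPolynomial (V ⊕ V) K) :=
  Ideal.span {p | ∃ i j : V, G.Adj i j ∧ p = bedge K i j}

/-- The (monomial) edge ideal of a graph `G`. -/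
def edgeIdealM {V : Type} (G : SimpleGraph V) : Ideal (MvPolynomial V K) :=
  Ideal.span {p | ∃ i j : V, G.Adj i j ∧ p = X i * X j}

/-- `i` and `j` are connected by a walk in `G` avoiding the set `S`. -/
def ReachAvoid {V : Type} (G : SimpleGraph V) (S : Set V) (i j : V) : Prop :=
  ∃ w : G.Walk i j, ∀ v ∈ w.support, v ∉ S

/-- The disjoint union of complete graphs on the connected components of `G ∖ S`. -/
def tildeG {V : Type} (G : SimpleGraph V) (S : Set V) : SimpleGraph V where
  Adj i j := i ≠ j ∧ ReachAvoid G S i j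
  symm := ⟨by
    rintro i j ⟨hne, w, hw⟩
    exact ⟨hne.symm, w.reverse, by
      intro v hv
      exact hw v (by simpa [SimpleGraph.Walk.support_reverse] using hv)⟩⟩
  loopless := ⟨fun i h => h.1 rfl⟩

/-- The minimal prime `P_S` of the binomial edge ideal corresponding to a cut set `S`. -/
def PSIdeal {V : Type} (G : SimpleGraph V) (S : Set V) : Ideal (MvPolynomial (V ⊕ V) K) :=
  Ideal.span ((fun i => (X (Sum.inl i) : MvPolynomial (V ⊕ V) K)) '' S ∪
      (fun i => (X (Sum.inr i) : MvPolynomial (V ⊕ V) K)) '' S)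
    ⊔ beIdeal K (tildeG G S)

/-- Number of connected components of the induced subgraph on the complement of `S`. -/
def numComp {V : Type} (G : SimpleGraph V) (S : Set V) : ℕ :=
  Nat.card ((G.induce Sᶜ).ConnectedComponent)

/-- `S` is a cut set of `G`. -/
def IsCutSet {V : Type} (G : SimpleGraph V) (S : Set V) : Prop :=
  ∀ s ∈ S, numComp G (S \ {s}) < numComp G S

/-- `v` is a cut vertex of `G`. -/
def IsCutVertex {V : Type} (G : SimpleGraph V) (v : V) : Prop :=
  numComp G (∅ : Set V) < numComp G {v}

/-- `G` is a cone graph: some vertex is adjacent to all others. -/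
def IsConeGraph {V : Type} (G : SimpleGraph V) : Prop :=
  ∃ v : V, ∀ u : V, u ≠ v → G.Adj v u

/-- `G` (with its labelling by `Fin n`) is a closed graph. -/
def IsClosedGraph {n : ℕ} (G : SimpleGraph (Fin n)) : Prop :=
  ∀ i j k : Fin n, i < j → j < k → G.Adj i k → G.Adj i j ∧ G.Adj j k

/-- `R/I` is Cohen-Macaulay: there is a regular sequence (inside the irrelevant
maximal ideal) on `R/I` whose length is the Krull dimension of `R/I`. -/
def IsCMQuot {σ : Type} (I : Ideal (MvPolynomial σ K)) : Prop :=
  ∃ rs : List (MvPolynomial σ K),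
    (∀ f ∈ rs, f ∈ Ideal.span (Set.range (X : σ → MvPolynomial σ K))) ∧
    RingTheory.Sequence.IsRegular (MvPolynomial σ K ⧸ I)
      (rs.map (Ideal.Quotient.mk I)) ∧
    ((rs.length : ℕ) : WithBot (WithTop ℕ)) = ringKrullDim (MvPolynomial σ K ⧸ I)

section Regularity

variable {σ : Type} [Fintype σ] [DecidableEq σ]

/-- An arbitrary linear order on a finite type. -/
def fintypeLO (σ : Type) [Fintype σ] [DecidableEq σ] : LinearOrder σ :=
  LinearOrder.lift' (Fintype.equivFin σ) (Fintype.equivFin σ).injective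

/-- Term of homological degree `i` of the Koszul complex of `R/I` with respect to all the
variables; its homology computes `Tor_i(R/I, K)`. -/
abbrev KC (I : Ideal (MvPolynomial σ K)) (i : ℕ) : Type :=
  {T : Finset σ // T.card = i} → MvPolynomial σ K ⧸ I

/-- The Koszul differential. -/
def koszD (I : Ideal (MvPolynomial σ K)) (i : ℕ) (f : KC K I (i + 1)) : KC K I i :=
  letI LO := fintypeLO σ
  letI : (p : Prop) → Decidable p := Classical.propDecidable
  fun T => ∑ t ∈ (Finset.univ \ T.1).attach,
    ((-1 : MvPolynomial σ K ⧸ I) ^ ((T.1.filter (fun a => LO.lt a t.1)).card)) *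
      (Ideal.Quotient.mk I (X t.1) *
        f ⟨insert t.1 T.1, by
          rw [Finset.card_insert_of_notMem (Finset.mem_sdiff.mp t.2).2, T.2]⟩)

/-- Being a cycle in the Koszul complex. -/
def isCycle (I : Ideal (MvPolynomial σ K)) : (i : ℕ) → KC K I i → Prop
  | 0, _ => True
  | (i + 1), f => koszD K I i f = 0

/-- Nonvanishing of the graded Betti number `β_{i,j}(R/I)`: the `i`-th Koszul homology has a
nonzero class of internal degree `j`. -/
def bettiNe (I : Ideal (MvPolynomial σ K)) (i j : ℕ) : Prop :=
  ∃ f : KC K I i,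
    (∀ T, ∃ p : MvPolynomial σ K, p.IsHomogeneous (j - i) ∧ Ideal.Quotient.mk I p = f T) ∧
    isCycle K I i f ∧ ¬ ∃ g : KC K I (i + 1), koszD K I i g = f

/-- The Castelnuovo-Mumford regularity of `R/I`, as `max { j - i : β_{i,j}(R/I) ≠ 0 }`. -/
def reg (I : Ideal (MvPolynomial σ K)) : ℕ :=
  sSup {r : ℕ | ∃ i j : ℕ, j = i + r ∧ bettiNe K I i j}

end Regularity

end

end Paper

namespace Paper

noncomputable section

variable (K : Type) [Field K]

/-- Rank of variables for the lex order `x_1 > ⋯ > x_n > y_1 > ⋯ > y_n`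
(smaller rank = higher priority). -/
def vrank {n : ℕ} : (Fin n ⊕ Fin n) → ℕ :=
  Sum.elim (fun i => (i : ℕ)) (fun i => n + (i : ℕ))

/-- Lexicographic comparison of monomials with respect to
`x_1 > ⋯ > x_n > y_1 > ⋯ > y_n`. -/
def monLt {n : ℕ} (a b : (Fin n ⊕ Fin n) →₀ ℕ) : Prop :=
  ∃ u, (∀ v, vrank v < vrank u → a v = b v) ∧ a u < b u

/-- `d` is the exponent of the leading monomial of `f` with respect to lex. -/
def IsLeadMon {n : ℕ} (f : MvPolynomial (Fin n ⊕ Fin n) K)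
    (d : (Fin n ⊕ Fin n) →₀ ℕ) : Prop :=
  d ∈ f.support ∧ ∀ e ∈ f.support, e ≠ d → monLt e d

/-- The initial ideal of `I` with respect to lex. -/
def initIdeal {n : ℕ} (I : Ideal (MvPolynomial (Fin n ⊕ Fin n) K)) :
    Ideal (MvPolynomial (Fin n ⊕ Fin n) K) :=
  Ideal.span {p | ∃ f ∈ I, ∃ d, IsLeadMon K f d ∧ p = monomial d (1 : K)}

/-! ### Auxiliary lemmas -/

lemma vrank_injective {n : ℕ} : Function.Injective (vrank (n := n)) := by
  rintro (a | a) (b | b) h <;>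
    simp only [vrank, Sum.elim_inl, Sum.elim_inr] at h
  · exact congrArg Sum.inl (Fin.ext h)
  · exact absurd h (by have := a.isLt; omega)
  · exact absurd h (by have := b.isLt; omega)
  · exact congrArg Sum.inr (Fin.ext (by omega))

lemma vrank_lt_two_n {n : ℕ} (v : Fin n ⊕ Fin n) : vrank v < 2 * n := by
  cases v with
  | inl a => have := a.isLt; simp only [vrank, Sum.elim_inl]; omega
  | inr a => have := a.isLt; simp only [vrank, Sum.elim_inr]; omega

lemma monLt_asymm {n : ℕ} {a b : (Fin n ⊕ Fin n) →₀ ℕ} (h1 : monLt a b) (h2 : monLt b a) :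
    False := by
  obtain ⟨u, hu, hlt⟩ := h1
  obtain ⟨w, hw, hlt'⟩ := h2
  rcases lt_trichotomy (vrank u) (vrank w) with h | h | h
  · have := hw u h; omega
  · have := vrank_injective h; subst this; omega
  · have := hu w h; omega

lemma monLt_total {n : ℕ} {a b : (Fin n ⊕ Fin n) →₀ ℕ} (h : a ≠ b) :
    monLt a b ∨ monLt b a := by
  classical
  have hmem : ∀ v : Fin n ⊕ Fin n, a v ≠ b v → v ∈ a.support ∪ b.support := by
    intro v hv
    by_cases h1 : a v = 0
    · exact Finset.mem_union_right _ (Finsupp.mem_support_iff.mpr (by omega))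
    · exact Finset.mem_union_left _ (Finsupp.mem_support_iff.mpr h1)
  set D := (a.support ∪ b.support).filter (fun v => a v ≠ b v) with hD
  have hDne : D.Nonempty := by
    obtain ⟨v, hv⟩ : ∃ v, a v ≠ b v := by
      by_contra hc
      push_neg at hc
      exact h (Finsupp.ext hc)
    exact ⟨v, Finset.mem_filter.mpr ⟨hmem v hv, hv⟩⟩
  obtain ⟨u, huD, hmin⟩ := D.exists_min_image vrank hDne
  have hpre : ∀ v, vrank v < vrank u → a v = b v := by
    intro v hv
    by_contra hc
    have hvD : v ∈ D := Finset.mem_filter.mpr ⟨hmem v hc, hc⟩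
    have := hmin v hvD
    omega
  have hne := (Finset.mem_filter.mp huD).2
  rcases lt_or_gt_of_ne hne with h1 | h1
  · exact Or.inl ⟨u, hpre, h1⟩
  · exact Or.inr ⟨u, fun v hv => (hpre v hv).symm, h1⟩

lemma monLt_add_left {n : ℕ} {a b : (Fin n ⊕ Fin n) →₀ ℕ} (c : (Fin n ⊕ Fin n) →₀ ℕ)
    (h : monLt a b) : monLt (c + a) (c + b) := by
  obtain ⟨u, hu, hlt⟩ := h
  refine ⟨u, fun v hv => ?_, ?_⟩ <;> simp only [Finsupp.add_apply]
  · rw [hu v hv]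
  · omega

/-- Base-`(m+1)` numeric value of a monomial exponent; strictly monotone w.r.t. `monLt`
on exponents with coordinates bounded by `m`. -/
def nval (n m : ℕ) (d : (Fin n ⊕ Fin n) →₀ ℕ) : ℕ :=
  ∑ v : Fin n ⊕ Fin n, d v * (m + 1) ^ (2 * n - 1 - vrank v)

lemma geom_aux (m k : ℕ) : m * (∑ j ∈ Finset.range k, (m + 1) ^ j) + 1 = (m + 1) ^ k := by
  induction k with
  | zero => simp
  | succ k ih =>
      rw [Finset.sum_range_succ, pow_succ]
      calc m * ((∑ j ∈ Finset.range k, (m + 1) ^ j) + (m + 1) ^ k) + 1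
          = (m * (∑ j ∈ Finset.range k, (m + 1) ^ j) + 1) + m * (m + 1) ^ k := by ring
        _ = (m + 1) ^ k + m * (m + 1) ^ k := by rw [ih]
        _ = (m + 1) ^ k * (m + 1) := by ring

lemma nval_lt_of_monLt {n m : ℕ} {a b : (Fin n ⊕ Fin n) →₀ ℕ}
    (ha : ∀ v, a v ≤ m) (h : monLt a b) : nval n m a < nval n m b := by
  classical
  obtain ⟨u, hpre, hu⟩ := h
  have hsplit : ∀ d : (Fin n ⊕ Fin n) →₀ ℕ, nval n m d =
      (∑ v ∈ Finset.univ.filter (fun v => vrank v < vrank u),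
          d v * (m + 1) ^ (2 * n - 1 - vrank v))
        + (d u * (m + 1) ^ (2 * n - 1 - vrank u)
          + ∑ v ∈ Finset.univ.filter (fun v => vrank u < vrank v),
              d v * (m + 1) ^ (2 * n - 1 - vrank v)) := by
    intro d
    unfold nval
    rw [← Finset.sum_filter_add_sum_filter_not Finset.univ
      (fun v => vrank v < vrank u)]
    congr 1
    have hset : Finset.univ.filter (fun v => ¬ vrank v < vrank u)
        = insert u (Finset.univ.filter (fun v => vrank u < vrank v)) := by
      ext v
      simp only [Finset.mem_filter, Finset.mem_insert, Finset.mem_univ, true_and]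
      constructor
      · intro hv
        rcases Nat.lt_or_ge (vrank u) (vrank v) with h1 | h1
        · exact Or.inr h1
        · exact Or.inl (vrank_injective (by omega))
      · rintro (rfl | hv) <;> omega
    rw [hset, Finset.sum_insert (by simp)]
  have hAeq : ∀ v ∈ Finset.univ.filter (fun v => vrank v < vrank u),
      a v * (m + 1) ^ (2 * n - 1 - vrank v) = b v * (m + 1) ^ (2 * n - 1 - vrank v) := by
    intro v hv
    rw [hpre v (Finset.mem_filter.mp hv).2]
  have htail : (∑ v ∈ Finset.univ.filter (fun v => vrank u < vrank v),
      a v * (m + 1) ^ (2 * n - 1 - vrank v)) < (m + 1) ^ (2 * n - 1 - vrank u) := by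
    have h1 : (∑ v ∈ Finset.univ.filter (fun v => vrank u < vrank v),
        a v * (m + 1) ^ (2 * n - 1 - vrank v))
        ≤ ∑ v ∈ Finset.univ.filter (fun v => vrank u < vrank v),
            m * (m + 1) ^ (2 * n - 1 - vrank v) :=
      Finset.sum_le_sum (fun v _ => Nat.mul_le_mul_right _ (ha v))
    have h2 : (∑ j ∈ (Finset.univ.filter (fun v : Fin n ⊕ Fin n => vrank u < vrank v)).image
            (fun v : Fin n ⊕ Fin n => 2 * n - 1 - vrank v), m * (m + 1) ^ j)
        = ∑ v ∈ Finset.univ.filter (fun v : Fin n ⊕ Fin n => vrank u < vrank v),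
            m * (m + 1) ^ (2 * n - 1 - vrank v) := by
      rw [Finset.sum_image]
      intro x hx y hy hxy
      have hx' := (Finset.mem_filter.mp hx).2
      have hy' := (Finset.mem_filter.mp hy).2
      have hxlt := vrank_lt_two_n x
      have hylt := vrank_lt_two_n y
      have hult := vrank_lt_two_n u
      have hxy' : 2 * n - 1 - vrank x = 2 * n - 1 - vrank y := hxy
      exact vrank_injective (by omega)
    have h3 : (Finset.univ.filter (fun v : Fin n ⊕ Fin n => vrank u < vrank v)).image
        (fun v : Fin n ⊕ Fin n => 2 * n - 1 - vrank v) ⊆ Finset.range (2 * n - 1 - vrank u) := by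
      intro j hj
      obtain ⟨v, hv, rfl⟩ := Finset.mem_image.mp hj
      have hv' := (Finset.mem_filter.mp hv).2
      have hv1 := vrank_lt_two_n v
      have hv2 := vrank_lt_two_n u
      exact Finset.mem_range.mpr (by omega)
    have h4 := Finset.sum_le_sum_of_subset h3 (f := fun j => m * (m + 1) ^ j)
    have h5 : (∑ j ∈ Finset.range (2 * n - 1 - vrank u), m * (m + 1) ^ j)
        < (m + 1) ^ (2 * n - 1 - vrank u) := by
      rw [← Finset.mul_sum]
      have := geom_aux m (2 * n - 1 - vrank u)
      linarith
    linarith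
  rw [hsplit a, hsplit b, Finset.sum_congr rfl hAeq]
  apply Nat.add_lt_add_left
  have hx : (a u + 1) * (m + 1) ^ (2 * n - 1 - vrank u)
      ≤ b u * (m + 1) ^ (2 * n - 1 - vrank u) := Nat.mul_le_mul_right _ hu
  have hexp : (a u + 1) * (m + 1) ^ (2 * n - 1 - vrank u)
      = a u * (m + 1) ^ (2 * n - 1 - vrank u) + (m + 1) ^ (2 * n - 1 - vrank u) := by ring
  have hTb : 0 ≤ ∑ v ∈ Finset.univ.filter (fun v => vrank u < vrank v),
      b v * (m + 1) ^ (2 * n - 1 - vrank v) := Nat.zero_le _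
  linarith

lemma Finsupp_degree_add {σ : Type} (a b : σ →₀ ℕ) :
    Finsupp.degree (a + b) = Finsupp.degree a + Finsupp.degree b := by
  rw [Finsupp.degree_eq_weight_one]
  exact map_add _ a b

lemma coord_le_of_isHomogeneous {n m : ℕ} {g : MvPolynomial (Fin n ⊕ Fin n) K}
    (hg : g.IsHomogeneous m) {d : (Fin n ⊕ Fin n) →₀ ℕ} (hd : d ∈ g.support)
    (v : Fin n ⊕ Fin n) : d v ≤ m := by
  have hdeg : Finsupp.degree d = m := by
    by_contra hc
    exact MvPolynomial.mem_support_iff.mp hd (hg.coeff_eq_zero hc)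
  exact hdeg ▸ Finsupp.le_degree v d

lemma exists_isLeadMon {n m : ℕ} {g : MvPolynomial (Fin n ⊕ Fin n) K}
    (hg : g.IsHomogeneous m) (hne : g ≠ 0) : ∃ d, IsLeadMon K g d := by
  have hs : g.support.Nonempty := by
    rw [Finset.nonempty_iff_ne_empty, Ne, MvPolynomial.support_eq_empty]
    exact hne
  obtain ⟨d, hd, hmax⟩ := g.support.exists_max_image (nval n m) hs
  refine ⟨d, hd, fun e he hne' => ?_⟩
  rcases monLt_total hne' with h | h
  · exact h
  · have h1 := nval_lt_of_monLt (fun v => coord_le_of_isHomogeneous K hg hd v) h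
    have h2 := hmax e he
    omega

attribute [local instance] MvPolynomial.gradedAlgebra

lemma beIdeal_isHomogeneous {V : Type} (G : SimpleGraph V) :
    Ideal.IsHomogeneous (homogeneousSubmodule (V ⊕ V) K) (beIdeal K G) := by
  apply Ideal.homogeneous_span
  rintro x ⟨i, j, hij, rfl⟩
  refine ⟨2, (mem_homogeneousSubmodule _ _).mpr ?_⟩
  have h1 : ((X (Sum.inl i) : MvPolynomial (V ⊕ V) K) * X (Sum.inr j)).IsHomogeneous 2 :=
    (isHomogeneous_X _ _).mul (isHomogeneous_X _ _)
  have h2 : ((X (Sum.inl j) : MvPolynomial (V ⊕ V) K) * X (Sum.inr i)).IsHomogeneous 2 :=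
    (isHomogeneous_X _ _).mul (isHomogeneous_X _ _)
  exact h1.sub h2

lemma homogeneousComponent_mem_beIdeal {V : Type} (G : SimpleGraph V)
    {h : MvPolynomial (V ⊕ V) K} (hh : h ∈ beIdeal K G) (k : ℕ) :
    homogeneousComponent k h ∈ beIdeal K G := by
  have hmem := beIdeal_isHomogeneous K G k hh
  rwa [show ((DirectSum.decompose (homogeneousSubmodule (V ⊕ V) K) h k :
      MvPolynomial (V ⊕ V) K)) = homogeneousComponent k h from
    decomposition.decompose'_apply h k] at hmem

lemma colon_congr_of_sub_mem {n : ℕ} {I : Ideal (MvPolynomial (Fin n ⊕ Fin n) K)}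
    {f g : MvPolynomial (Fin n ⊕ Fin n) K} (h : g - f ∈ I) :
    Submodule.colon I (Ideal.span {g}) = Submodule.colon I (Ideal.span {f}) := by
  ext r
  simp only [Ideal.mem_colon_span_singleton]
  constructor
  · intro h1
    have h2 : r * (g - f) ∈ I := I.mul_mem_left r h
    have h3 : r * f = r * g - r * (g - f) := by ring
    rw [h3]
    exact Submodule.sub_mem _ h1 h2
  · intro h1
    have h2 : r * (g - f) ∈ I := I.mul_mem_left r h
    have h3 : r * g = r * f + r * (g - f) := by ring
    rw [h3]
    exact Ideal.add_mem _ h1 h2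

lemma initIdeal_eq_span_image {n : ℕ} (I : Ideal (MvPolynomial (Fin n ⊕ Fin n) K)) :
    initIdeal K I =
      Ideal.span ((fun d => monomial d (1 : K)) '' {d | ∃ h ∈ I, IsLeadMon K h d}) := by
  unfold initIdeal
  congr 1
  ext p
  constructor
  · rintro ⟨h, hh, d, hd, rfl⟩
    exact ⟨d, ⟨h, hh, hd⟩, rfl⟩
  · rintro ⟨d, ⟨h, hh, hd⟩, rfl⟩
    exact ⟨h, hh, d, hd, rfl⟩

lemma support_homogeneousComponent_subset {n : ℕ} (k : ℕ)
    (h : MvPolynomial (Fin n ⊕ Fin n) K) :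
    (homogeneousComponent k h).support ⊆ h.support := by
  intro e he
  rw [MvPolynomial.mem_support_iff] at he ⊢
  rw [coeff_homogeneousComponent] at he
  by_cases hd : Finsupp.degree e = k
  · simpa [hd] using he
  · simp [hd] at he

/-- Key step: by descending induction on the numeric value of the lead monomial, every
homogeneous polynomial not in `J_G` can be modified modulo `J_G` so that its lead monomial
is not in the initial ideal. -/
lemma key_step {n m : ℕ} (G : SimpleGraph (Fin n)) :
    ∀ N : ℕ, ∀ g : MvPolynomial (Fin n ⊕ Fin n) K, ∀ d : (Fin n ⊕ Fin n) →₀ ℕ,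
      nval n m d ≤ N → g.IsHomogeneous m → g ∉ beIdeal K G → IsLeadMon K g d →
      ∃ g' : MvPolynomial (Fin n ⊕ Fin n) K, ∃ d' : (Fin n ⊕ Fin n) →₀ ℕ,
        g'.IsHomogeneous m ∧ g' - g ∈ beIdeal K G ∧ IsLeadMon K g' d' ∧
        monomial d' (1 : K) ∉ initIdeal K (beIdeal K G) := by
  intro N
  induction N using Nat.strong_induction_on with
  | _ N IH =>
  intro g d hN hhom hgI hlead
  by_cases hinit : monomial d (1 : K) ∈ initIdeal K (beIdeal K G)
  swap
  · refine ⟨g, d, hhom, ?_, hlead, hinit⟩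
    rw [sub_self]
    exact Ideal.zero_mem _
  · classical
    rw [initIdeal_eq_span_image] at hinit
    have hsupp := MvPolynomial.mem_ideal_span_monomial_image.mp hinit
    have hd_mem : d ∈ (monomial d (1 : K)).support := by
      rw [MvPolynomial.support_monomial, if_neg one_ne_zero]
      exact Finset.mem_singleton_self d
    obtain ⟨s, hs, hsle⟩ := hsupp d hd_mem
    obtain ⟨h, hhI, hhs⟩ := hs
    set k := Finsupp.degree s with hk
    have hcompI : homogeneousComponent k h ∈ beIdeal K G :=
      homogeneousComponent_mem_beIdeal K G hhI k
    set c : K := g.coeff d / h.coeff s with hc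
    set q : MvPolynomial (Fin n ⊕ Fin n) K :=
      monomial (d - s) c * homogeneousComponent k h with hq
    have hqI : q ∈ beIdeal K G := Ideal.mul_mem_left _ _ hcompI
    have hds : (d - s) + s = d := tsub_add_cancel_of_le hsle
    have hhs_ne : h.coeff s ≠ 0 := MvPolynomial.mem_support_iff.mp hhs.1
    have hgd_ne : g.coeff d ≠ 0 := MvPolynomial.mem_support_iff.mp hlead.1
    have hc_ne : c ≠ 0 := div_ne_zero hgd_ne hhs_ne
    have hcomp_s : (homogeneousComponent k h).coeff s = h.coeff s := by
      rw [coeff_homogeneousComponent, if_pos rfl]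
    have hq_d : q.coeff d = g.coeff d := by
      have haux : q.coeff ((d - s) + s) = c * (homogeneousComponent k h).coeff s := by
        rw [hq]
        exact MvPolynomial.coeff_monomial_mul _ _ _ _
      rw [hds] at haux
      rw [haux, hcomp_s, hc]
      exact div_mul_cancel₀ _ hhs_ne
    set g' := g - q with hg'
    have hg'I : g' - g ∈ beIdeal K G := by
      have heq : g' - g = -q := by rw [hg']; ring
      rw [heq]
      exact Submodule.neg_mem _ hqI
    have hd_deg : Finsupp.degree d = m := by
      by_contra hcon
      exact MvPolynomial.mem_support_iff.mp hlead.1 (hhom.coeff_eq_zero hcon)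
    have hdeg_split : Finsupp.degree (d - s) + k = m := by
      rw [hk, ← Finsupp_degree_add, hds, hd_deg]
    have hq_hom : q.IsHomogeneous m := by
      have hmul := (isHomogeneous_monomial (d := d - s) c rfl).mul
        (homogeneousComponent_isHomogeneous (n := k) (φ := h))
      rw [hq]
      rwa [hdeg_split] at hmul
    have hg'_hom : g'.IsHomogeneous m := hhom.sub hq_hom
    have hg'_ne : g' ≠ 0 := by
      intro h0
      apply hgI
      have hge : g = q := by
        rw [hg'] at h0
        exact sub_eq_zero.mp h0
      rw [hge]
      exact hqI
    have hg'_d : g'.coeff d = 0 := by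
      rw [hg', MvPolynomial.coeff_sub, hq_d, sub_self]
    obtain ⟨d', hd'⟩ := exists_isLeadMon K hg'_hom hg'_ne
    have hd'_ne : d' ≠ d := by
      intro hdd
      rw [hdd] at hd'
      exact MvPolynomial.mem_support_iff.mp hd'.1 hg'_d
    have hsub : g'.support ⊆ g.support ∪ q.support := by
      intro e he
      rw [MvPolynomial.mem_support_iff] at he
      rw [hg', MvPolynomial.coeff_sub] at he
      rw [Finset.mem_union, MvPolynomial.mem_support_iff, MvPolynomial.mem_support_iff]
      by_contra hcon
      push_neg at hcon
      rw [hcon.1, hcon.2, sub_self] at he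
      exact he rfl
    have hq_supp : ∀ e ∈ q.support, e ≠ d → monLt e d := by
      intro e he hed
      have hmem := MvPolynomial.support_mul _ _ (hq ▸ he)
      rw [Finset.mem_add] at hmem
      obtain ⟨e1, he1, e2, he2, rfl⟩ := hmem
      have he1' : e1 = d - s := by
        rw [MvPolynomial.support_monomial, if_neg hc_ne, Finset.mem_singleton] at he1
        exact he1
      have he2' : e2 ∈ h.support := support_homogeneousComponent_subset K k h he2
      have he2s : e2 ≠ s := by
        intro h2
        apply hed
        rw [he1', h2, hds]
      have hlt := monLt_add_left (d - s) (hhs.2 e2 he2' he2s)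
      rw [hds] at hlt
      rw [he1']
      exact hlt
    have hlt : monLt d' d := by
      rcases Finset.mem_union.mp (hsub hd'.1) with h1 | h1
      · exact hlead.2 d' h1 hd'_ne
      · exact hq_supp d' h1 hd'_ne
    have hd'_bound : ∀ v, d' v ≤ m := coord_le_of_isHomogeneous K hg'_hom hd'.1
    have hlt_n : nval n m d' < nval n m d := nval_lt_of_monLt hd'_bound hlt
    have hg'_notI : g' ∉ beIdeal K G := by
      intro hmem
      apply hgI
      have hge : g = g' - (g' - g) := by ring
      rw [hge]
      exact Submodule.sub_mem _ hmem hg'I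
    obtain ⟨g'', d'', h1, h2, h3, h4⟩ :=
      IH (nval n m d') (by omega) g' d' le_rfl hg'_hom hg'_notI hd'
    refine ⟨g'', d'', h1, ?_, h3, h4⟩
    have heq2 : g'' - g = (g'' - g') + (g' - g) := by ring
    rw [heq2]
    exact Ideal.add_mem _ h2 hg'I

theorem statement_0 {n m : ℕ} (G : SimpleGraph (Fin n))
    (f : MvPolynomial (Fin n ⊕ Fin n) K) (hf : f.IsHomogeneous m)
    (P : Ideal (MvPolynomial (Fin n ⊕ Fin n) K))
    (hP : P ∈ (beIdeal K G).minimalPrimes)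
    (hcol : Submodule.colon (beIdeal K G) (Ideal.span {f}) = P) :
    ∃ g : MvPolynomial (Fin n ⊕ Fin n) K, g.IsHomogeneous m ∧
      (∀ d, IsLeadMon K g d → (monomial d (1 : K)) ∉ initIdeal K (beIdeal K G)) ∧
      Submodule.colon (beIdeal K G) (Ideal.span {g}) = P := by
  have hPprime : P.IsPrime := hP.1.1
  have hfI : f ∉ beIdeal K G := by
    intro hfmem
    apply hPprime.ne_top
    rw [← hcol, eq_top_iff]
    intro r _
    rw [Ideal.mem_colon_span_singleton]
    exact Ideal.mul_mem_left _ r hfmem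
  have hf0 : f ≠ 0 := by
    rintro rfl
    exact hfI (Ideal.zero_mem _)
  obtain ⟨d0, hd0⟩ := exists_isLeadMon K hf hf0
  obtain ⟨g, d', hg_hom, hgf, hglead, hginit⟩ :=
    key_step K G (nval n m d0) f d0 le_rfl hf hfI hd0
  refine ⟨g, hg_hom, ?_, ?_⟩
  · intro d hd
    have hdd : d = d' := by
      by_contra hne
      exact monLt_asymm (hglead.2 d hd.1 hne) (hd.2 d' hglead.1 (fun h => hne h.symm))
    rwa [hdd]
  · rw [colon_congr_of_sub_mem K hgf, hcol]

end

end Paper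
end

section
/- Let $G$ be a connected graph that is not a cone graph. If there exist adjacent vertices $u,v$ with $N_G(u)\cup N_G(v)=V(G)$, then $\mathrm{v}(J_G)=2$. -/
open MvPolynomial

set_option synthInstance.maxHeartbeats 1000000

namespace Paper

variable (K : Type) [Field K]

set_option linter.unusedSectionVars false

noncomputable section AuxProof


variable {V : Type} {G : SimpleGraph V}

lemma bedge_mem {i j : V} (h : G.Adj i j) : bedge K i j ∈ beIdeal K G :=
  Ideal.subset_span ⟨i, j, h, rfl⟩

lemma bedge_swap (i j : V) : bedge K j i = - bedge K i j := by
  unfold bedge; ring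

/-- x_w · f_{ab} ∈ J_G when a,b have common neighbor w. -/
lemma x_mul_bedge_mem {a b w : V} (h1 : G.Adj a w) (h2 : G.Adj b w) :
    X (Sum.inl w) * bedge K a b ∈ beIdeal K G := by
  have key : X (Sum.inl w) * bedge K a b
      = X (Sum.inl b) * bedge K a w - X (Sum.inl a) * bedge K b w := by
    simp only [bedge]; ring
  rw [key]
  exact sub_mem (Ideal.mul_mem_left _ _ (bedge_mem K h1)) (Ideal.mul_mem_left _ _ (bedge_mem K h2))

lemma y_mul_bedge_mem {a b w : V} (h1 : G.Adj a w) (h2 : G.Adj b w) :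
    X (Sum.inr w) * bedge K a b ∈ beIdeal K G := by
  have key : X (Sum.inr w) * bedge K a b
      = X (Sum.inr b) * bedge K a w - X (Sum.inr a) * bedge K b w := by
    simp only [bedge]; ring
  rw [key]
  exact sub_mem (Ideal.mul_mem_left _ _ (bedge_mem K h1)) (Ideal.mul_mem_left _ _ (bedge_mem K h2))

/-- The "P4" certificate: x_u y_v f_{ab} = (x_b y_v) f_{au} + (x_a y_b) f_{uv} - (x_a y_u) f_{bv}. -/
lemma p4_mem {a b u v : V} (hau : G.Adj a u) (huv : G.Adj u v) (hbv : G.Adj b v) :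
    X (Sum.inl u) * X (Sum.inr v) * bedge K a b ∈ beIdeal K G := by
  have key : X (Sum.inl u) * X (Sum.inr v) * bedge K a b
      = X (Sum.inl b) * X (Sum.inr v) * bedge K a u
        + X (Sum.inl a) * X (Sum.inr b) * bedge K u v
        - X (Sum.inl a) * X (Sum.inr u) * bedge K b v := by
    simp only [bedge]; ring
  rw [key]
  exact sub_mem (add_mem (Ideal.mul_mem_left _ _ (bedge_mem K hau))
    (Ideal.mul_mem_left _ _ (bedge_mem K huv))) (Ideal.mul_mem_left _ _ (bedge_mem K hbv))

/-- Main cover lemma: under hN, x_u y_v · f_{ij} ∈ J_G for ALL i j. -/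
lemma cover_mem {u v : V} (huv : G.Adj u v)
    (hN : ∀ w : V, G.Adj u w ∨ G.Adj v w) (i j : V) :
    X (Sum.inl u) * X (Sum.inr v) * bedge K i j ∈ beIdeal K G := by
  rcases hN i with hi | hi <;> rcases hN j with hj | hj
  · -- i ~ u, j ~ u : x_u f_ij ∈ J
    have := x_mul_bedge_mem K (G := G) hi.symm hj.symm
    have key : X (Sum.inl u) * X (Sum.inr v) * bedge K i j
        = X (Sum.inr v) * (X (Sum.inl u) * bedge K i j) := by ring
    rw [key]; exact Ideal.mul_mem_left _ _ this
  · -- i ~ u, j ~ v : p4 with (a,b) = (i,j)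
    exact p4_mem K hi.symm huv hj.symm
  · -- i ~ v, j ~ u : p4 with (a,b) = (j,i), then swap
    have := p4_mem K (G := G) hj.symm huv hi.symm
    rw [bedge_swap]
    have key : X (Sum.inl u) * X (Sum.inr v) * -bedge K j i
        = -(X (Sum.inl u) * X (Sum.inr v) * bedge K j i) := by ring
    rw [key]; exact neg_mem this
  · -- i ~ v, j ~ v : y_v f_ij ∈ J
    have := y_mul_bedge_mem K (G := G) hi.symm hj.symm
    have key : X (Sum.inl u) * X (Sum.inr v) * bedge K i j
        = X (Sum.inl u) * (X (Sum.inr v) * bedge K i j) := by ring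
    rw [key]; exact Ideal.mul_mem_left _ _ this


variable {V : Type}

open Classical in
/-- Separation evaluation data: kill vertices in `S`, give component label `χ`. -/
def sepAux (S : Set V) (χ : V → ℕ) : V ⊕ V → MvPolynomial ((Bool × ℕ) ⊕ V) K :=
  Sum.elim (fun i => if i ∈ S then 0 else X (Sum.inl (false, χ i)) * X (Sum.inr i))
           (fun i => if i ∈ S then 0 else X (Sum.inl (true, χ i)) * X (Sum.inr i))

def sepHom (S : Set V) (χ : V → ℕ) :
    MvPolynomial (V ⊕ V) K →+* MvPolynomial ((Bool × ℕ) ⊕ V) K :=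
  (aeval (sepAux K S χ)).toRingHom

lemma sepHom_C (S : Set V) (χ : V → ℕ) (c : K) :
    sepHom K S χ (C c) = C c := by
  simp [sepHom]

lemma sepHom_X (S : Set V) (χ : V → ℕ) (z : V ⊕ V) :
    sepHom K S χ (X z) = sepAux K S χ z := by
  simp [sepHom]

section Graph
variable {G : SimpleGraph V}

lemma sep1' {S : Set V} {χ : V → ℕ} (i j : V)
    (h : i ∈ S ∨ j ∈ S ∨ χ i = χ j) : sepHom K S χ (bedge K i j) = 0 := by
  classical
  simp only [bedge, map_sub, map_mul, sepHom_X, sepAux, Sum.elim_inl, Sum.elim_inr]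
  rcases h with hi | hj | hχ
  · simp only [if_pos hi]; ring
  · simp only [if_pos hj]; ring
  · by_cases hi : i ∈ S
    · simp only [if_pos hi]; ring
    · by_cases hj : j ∈ S
      · simp only [if_pos hj]; ring
      · simp only [if_neg hi, if_neg hj]; rw [hχ]; ring

end Graph

/-- Nonvanishing of `sepHom` on a separated bedge. -/
lemma sep2 {S : Set V} {χ : V → ℕ} {a b : V} (ha : a ∉ S) (hb : b ∉ S)
    (hχ : χ a ≠ χ b) : sepHom K S χ (bedge K a b) ≠ 0 := by
  classical
  intro h0
  -- evaluate at a point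
  set ε0 : (Bool × ℕ) ⊕ V → K :=
    Sum.elim (fun p => if p = (false, χ a) ∨ p = (true, χ b) then 1 else 0) (fun _ => 1) with hε0
  have := congrArg (eval ε0) h0
  rw [map_zero] at this
  simp only [bedge, map_sub, map_mul, sepHom_X, sepAux, Sum.elim_inl, Sum.elim_inr,
    if_neg ha, if_neg hb, eval_mul, eval_X, hε0] at this
  simp [Prod.ext_iff, hχ, hχ.symm] at this

/-- Nonvanishing on a surviving variable. -/
lemma sep2X {S : Set V} {χ : V → ℕ} {z : V ⊕ V} (hz : z.elim (· ∉ S) (· ∉ S)) :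
    sepHom K S χ (X z) ≠ 0 := by
  classical
  intro h0
  have := congrArg (eval (fun _ => (1 : K))) h0
  rw [map_zero] at this
  cases z with
  | inl i => simp [sepHom_X, sepAux, if_neg hz] at this
  | inr i => simp [sepHom_X, sepAux, if_neg hz] at this

lemma degree_eq_one {σ : Type} (d : σ →₀ ℕ) (h : d.degree = 1) :
    ∃ z, d = Finsupp.single z 1 := by
  classical
  have hne : d.support.Nonempty := by
    rcases Finset.eq_empty_or_nonempty d.support with he | hne
    · exfalso; rw [Finsupp.degree_apply, he] at h; simp at h
    · exact hne
  obtain ⟨z, hz⟩ := hne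
  have hdz : 1 ≤ d z := Nat.one_le_iff_ne_zero.mpr (Finsupp.mem_support_iff.mp hz)
  have hle : d z ≤ d.degree := Finset.single_le_sum (fun i _ => Nat.zero_le _) hz
  have hdz1 : d z = 1 := le_antisymm (h ▸ hle) hdz
  refine ⟨z, ?_⟩
  ext a
  rcases eq_or_ne a z with rfl | hne'
  · simp [hdz1]
  · rw [Finsupp.single_apply, if_neg (Ne.symm hne')]
    by_contra hda
    have haz : a ∈ d.support := Finsupp.mem_support_iff.mpr hda
    have : d z + d a ≤ d.degree := by
      rw [Finsupp.degree_apply]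
      have := Finset.add_sum_erase _ d hz
      calc d z + d a ≤ d z + ∑ i ∈ d.support.erase z, d i := by
            refine Nat.add_le_add_left ?_ _
            exact Finset.single_le_sum (fun i _ => Nat.zero_le _)
              (Finset.mem_erase.mpr ⟨hne', haz⟩)
        _ = _ := this
    omega

/-- Representation of a linear form. -/
lemma lin_rep {σ : Type} [Fintype σ] (f : MvPolynomial σ K) (hf : f.IsHomogeneous 1) :
    f = ∑ z : σ, C (coeff (Finsupp.single z 1) f) * X z := by
  classical
  ext d
  rw [coeff_sum]
  simp only [coeff_C_mul, coeff_X']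
  by_cases hd : ∃ z, d = Finsupp.single z 1
  · obtain ⟨z, rfl⟩ := hd
    rw [Finset.sum_eq_single z]
    · simp
    · intro b _ hbz
      rw [if_neg, mul_zero]
      intro he
      exact hbz (Finsupp.single_left_injective one_ne_zero he)
    · simp
  · have h1 : coeff d f = 0 := by
      by_contra hc
      have := hf hc
      have hdeg : d.degree = 1 := by
        rw [Finsupp.degree_eq_weight_one]; exact_mod_cast this
      exact hd (degree_eq_one d hdeg)
    rw [h1]
    symm
    apply Finset.sum_eq_zero
    intro z _
    rw [if_neg, mul_zero]
    intro he; exact hd ⟨z, he.symm⟩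

/-- Key nonvanishing: a linear form supported at a surviving vertex has nonzero image. -/
lemma sep3 [Fintype V] {S : Set V} {χ : V → ℕ} {f : MvPolynomial (V ⊕ V) K}
    (hf : f.IsHomogeneous 1) (z0 : V ⊕ V)
    (hc : coeff (Finsupp.single z0 1) f ≠ 0)
    (hz0 : z0.elim (· ∉ S) (· ∉ S)) : sepHom K S χ f ≠ 0 := by
  classical
  intro h0
  rw [lin_rep K f hf] at h0
  cases z0 with
  | inl w0 =>
    set ε0 : (Bool × ℕ) ⊕ V → K :=
      Sum.elim (fun p => if p.1 = false then 1 else 0) (fun i => if i = w0 then 1 else 0) with hε0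
    have hval : eval ε0 (sepHom K S χ (∑ z : V ⊕ V, C (coeff (Finsupp.single z 1) f) * X z))
        = coeff (Finsupp.single (Sum.inl w0) 1) f := by
      rw [map_sum, Fintype.sum_sum_type, map_add, map_sum, map_sum]
      simp only [map_mul, sepHom_X, sepHom_C, eval_mul, eval_C]
      have hterm1 : ∀ i : V, coeff (Finsupp.single (Sum.inl i) 1) f *
          eval ε0 (sepAux K S χ (Sum.inl i)) =
          if i = w0 then coeff (Finsupp.single (Sum.inl w0) 1) f else 0 := by
        intro i
        simp only [sepAux, Sum.elim_inl]
        by_cases hiS : i ∈ S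
        · rw [if_pos hiS, map_zero, mul_zero, if_neg]
          rintro rfl; exact hz0 hiS
        · rw [if_neg hiS, eval_mul, eval_X, eval_X, hε0]
          simp only [Sum.elim_inl, Sum.elim_inr]
          rcases eq_or_ne i w0 with rfl | hne
          · simp
          · simp [hne]
      have hterm2 : ∀ i : V, coeff (Finsupp.single (Sum.inr i) 1) f *
          eval ε0 (sepAux K S χ (Sum.inr i)) = 0 := by
        intro i
        simp only [sepAux, Sum.elim_inr]
        by_cases hiS : i ∈ S
        · rw [if_pos hiS, map_zero, mul_zero]
        · rw [if_neg hiS, eval_mul, eval_X, eval_X, hε0]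
          simp only [Sum.elim_inl]
          norm_num
      rw [Finset.sum_congr rfl (fun i _ => hterm1 i), Finset.sum_congr rfl (fun i _ => hterm2 i),
        Finset.sum_ite_eq' Finset.univ w0]
      simp
    rw [h0, map_zero] at hval
    exact hc hval.symm
  | inr w0 =>
    set ε0 : (Bool × ℕ) ⊕ V → K :=
      Sum.elim (fun p => if p.1 = true then 1 else 0) (fun i => if i = w0 then 1 else 0) with hε0
    have hval : eval ε0 (sepHom K S χ (∑ z : V ⊕ V, C (coeff (Finsupp.single z 1) f) * X z))
        = coeff (Finsupp.single (Sum.inr w0) 1) f := by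
      rw [map_sum, Fintype.sum_sum_type, map_add, map_sum, map_sum]
      simp only [map_mul, sepHom_X, sepHom_C, eval_mul, eval_C]
      have hterm1 : ∀ i : V, coeff (Finsupp.single (Sum.inl i) 1) f *
          eval ε0 (sepAux K S χ (Sum.inl i)) = 0 := by
        intro i
        simp only [sepAux, Sum.elim_inl]
        by_cases hiS : i ∈ S
        · rw [if_pos hiS, map_zero, mul_zero]
        · rw [if_neg hiS, eval_mul, eval_X, eval_X, hε0]
          simp only [Sum.elim_inl]
          norm_num
      have hterm2 : ∀ i : V, coeff (Finsupp.single (Sum.inr i) 1) f *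
          eval ε0 (sepAux K S χ (Sum.inr i)) =
          if i = w0 then coeff (Finsupp.single (Sum.inr w0) 1) f else 0 := by
        intro i
        simp only [sepAux, Sum.elim_inr]
        by_cases hiS : i ∈ S
        · rw [if_pos hiS, map_zero, mul_zero, if_neg]
          rintro rfl; exact hz0 hiS
        · rw [if_neg hiS, eval_mul, eval_X, eval_X, hε0]
          simp only [Sum.elim_inl, Sum.elim_inr]
          rcases eq_or_ne i w0 with rfl | hne
          · simp
          · simp [hne]
      rw [Finset.sum_congr rfl (fun i _ => hterm1 i), Finset.sum_congr rfl (fun i _ => hterm2 i),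
        Finset.sum_ite_eq' Finset.univ w0]
      simp
    rw [h0, map_zero] at hval
    exact hc hval.symm


section Kernel
variable {V : Type}

/-- Exponent of the image of a variable under `sepHom ∅ 0`. -/
def Eexp : V ⊕ V → ((Bool × ℕ) ⊕ V →₀ ℕ) :=
  Sum.elim (fun i => Finsupp.single (Sum.inl (false, 0)) 1 + Finsupp.single (Sum.inr i) 1)
           (fun i => Finsupp.single (Sum.inl (true, 0)) 1 + Finsupp.single (Sum.inr i) 1)

/-- The exponent-level map induced by `sepHom ∅ 0`. -/
def Fmap (m : V ⊕ V →₀ ℕ) : (Bool × ℕ) ⊕ V →₀ ℕ :=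
  m.sum fun z e => e • Eexp z

lemma sepAux_empty (z : V ⊕ V) :
    sepAux K (∅ : Set V) (fun _ => 0) z = monomial (Eexp z) 1 := by
  cases z with
  | inl i =>
      simp only [sepAux, Sum.elim_inl, Set.mem_empty_iff_false, if_false, Eexp]
      rw [X, X, monomial_mul, one_mul]
  | inr i =>
      simp only [sepAux, Sum.elim_inr, Set.mem_empty_iff_false, if_false, Eexp]
      rw [X, X, monomial_mul, one_mul]

lemma Fmap_add (a b : V ⊕ V →₀ ℕ) : Fmap (a + b) = Fmap a + Fmap b := by
  unfold Fmap
  rw [Finsupp.sum_add_index']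
  · intro z; rw [zero_smul]
  · intro z e1 e2; rw [add_smul]

lemma Fmap_single (z : V ⊕ V) (n : ℕ) : Fmap (Finsupp.single z n) = n • Eexp z := by
  unfold Fmap
  rw [Finsupp.sum_single_index]
  rw [zero_smul]

lemma phi0_monomial (m : V ⊕ V →₀ ℕ) (c : K) :
    sepHom K (∅ : Set V) (fun _ => 0) (monomial m c) = monomial (Fmap m) c := by
  classical
  have key : ∀ m : V ⊕ V →₀ ℕ,
      sepHom K (∅ : Set V) (fun _ => 0) (monomial m 1) = monomial (Fmap m) 1 := by
    intro m
    induction m using Finsupp.induction with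
    | zero =>
        rw [show Fmap (0 : V ⊕ V →₀ ℕ) = 0 from by unfold Fmap; simp]
        simp [monomial_zero']
    | single_add z n f hzf hn ih =>
        rw [show Finsupp.single z n + f = f + Finsupp.single z n from add_comm _ _]
        rw [show monomial (f + Finsupp.single z n) (1:K)
            = monomial f 1 * monomial (Finsupp.single z n) 1 from by
          rw [monomial_mul, one_mul]]
        rw [map_mul, ih, Fmap_add, Fmap_single]
        rw [show monomial (Finsupp.single z n) (1:K) = (monomial (Finsupp.single z 1) 1) ^ n from by
          rw [monomial_pow, one_pow, Finsupp.smul_single, smul_eq_mul, mul_one]]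
        rw [show monomial (Finsupp.single z 1) (1:K) = X z from rfl]
        rw [map_pow, sepHom_X, sepAux_empty, monomial_pow, one_pow, monomial_mul, one_mul]
  have : monomial m c = C c * monomial m 1 := by rw [C_mul_monomial, mul_one]
  rw [this, map_mul, sepHom_C, key, C_mul_monomial, mul_one]

variable [Fintype V]

lemma Fmap_apply (m : V ⊕ V →₀ ℕ) (k : (Bool × ℕ) ⊕ V) :
    Fmap m k = ∑ z : V ⊕ V, m z * Eexp z k := by
  classical
  unfold Fmap
  rw [Finsupp.sum_apply]
  rw [Finsupp.sum_fintype]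
  · apply Finset.sum_congr rfl
    intro z _
    simp
  · intro z; simp

lemma Fmap_inl_false (m : V ⊕ V →₀ ℕ) :
    Fmap m (Sum.inl (false, 0)) = ∑ i : V, m (Sum.inl i) := by
  classical
  rw [Fmap_apply, Fintype.sum_sum_type]
  have h1 : ∀ i : V, m (Sum.inl i) * Eexp (V := V) (Sum.inl i) (Sum.inl (false, 0))
      = m (Sum.inl i) := by
    intro i; simp [Eexp, Finsupp.single_apply]
  have h2 : ∀ i : V, m (Sum.inr i) * Eexp (V := V) (Sum.inr i) (Sum.inl (false, 0)) = 0 := by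
    intro i; simp [Eexp, Finsupp.single_apply]
  rw [Finset.sum_congr rfl (fun i _ => h1 i), Finset.sum_congr rfl (fun i _ => h2 i)]
  simp

lemma Fmap_inr (m : V ⊕ V →₀ ℕ) (i : V) :
    Fmap m (Sum.inr i) = m (Sum.inl i) + m (Sum.inr i) := by
  classical
  rw [Fmap_apply, Fintype.sum_sum_type]
  have h1 : ∀ j : V, m (Sum.inl j) * Eexp (V := V) (Sum.inl j) (Sum.inr i)
      = if j = i then m (Sum.inl i) else 0 := by
    intro j
    simp only [Eexp, Sum.elim_inl, Finsupp.add_apply, Finsupp.single_apply]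
    rcases eq_or_ne j i with rfl | h
    · simp
    · simp [h, Sum.inr.injEq]
  have h2 : ∀ j : V, m (Sum.inr j) * Eexp (V := V) (Sum.inr j) (Sum.inr i)
      = if j = i then m (Sum.inr i) else 0 := by
    intro j
    simp only [Eexp, Sum.elim_inr, Finsupp.add_apply, Finsupp.single_apply]
    rcases eq_or_ne j i with rfl | h
    · simp
    · simp [h, Sum.inr.injEq]
  rw [Finset.sum_congr rfl (fun j _ => h1 j), Finset.sum_congr rfl (fun j _ => h2 j)]
  rw [Finset.sum_ite_eq' Finset.univ i, Finset.sum_ite_eq' Finset.univ i]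
  simp

/-- Two monomials in the same fiber of `Fmap` differ by an element of the
binomial edge ideal of the complete graph. -/
lemma fiber_swap : ∀ (n : ℕ) (m m' : V ⊕ V →₀ ℕ),
    (∑ i : V, (m (Sum.inl i) - m' (Sum.inl i))) = n → Fmap m = Fmap m' →
    monomial m (1:K) - monomial m' 1 ∈ beIdeal K (⊤ : SimpleGraph V) := by
  classical
  intro n
  induction n using Nat.strong_induction_on with
  | _ n IH =>
    intro m m' hD hF
    have hsum : ∑ i : V, m (Sum.inl i) = ∑ i : V, m' (Sum.inl i) := by
      have := congrArg (fun F => F (Sum.inl (false, 0))) hF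
      simpa [Fmap_inl_false] using this
    have hinr : ∀ i : V, m (Sum.inl i) + m (Sum.inr i) = m' (Sum.inl i) + m' (Sum.inr i) := by
      intro i
      have := congrArg (fun F => F (Sum.inr i)) hF
      simpa [Fmap_inr] using this
    by_cases hex : ∃ i, m' (Sum.inl i) < m (Sum.inl i)
    · obtain ⟨i, hi⟩ := hex
      have hexj : ∃ j, m (Sum.inl j) < m' (Sum.inl j) := by
        by_contra hno
        push_neg at hno
        have : ∑ j : V, m' (Sum.inl j) < ∑ j : V, m (Sum.inl j) :=
          Finset.sum_lt_sum (fun j _ => hno j) ⟨i, Finset.mem_univ i, hi⟩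
        omega
      obtain ⟨j, hj⟩ := hexj
      have hij : i ≠ j := by intro h; rw [h] at hi; omega
      have hmi : 1 ≤ m (Sum.inl i) := by omega
      have hmj : 1 ≤ m (Sum.inr j) := by have := hinr j; omega
      set s : V ⊕ V →₀ ℕ := Finsupp.single (Sum.inl i) 1 + Finsupp.single (Sum.inr j) 1 with hs
      set s' : V ⊕ V →₀ ℕ := Finsupp.single (Sum.inl j) 1 + Finsupp.single (Sum.inr i) 1 with hs'
      set r : V ⊕ V →₀ ℕ := m - s with hr
      have hsi : s (Sum.inl i) = 1 := by
        rw [hs]; simp [Finsupp.single_apply]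
      have hsj : s (Sum.inl j) = 0 := by
        rw [hs]; simp [Finsupp.single_apply, hij]
      have hsk : ∀ k : V, k ≠ i → s (Sum.inl k) = 0 := by
        intro k hk
        rw [hs]; simp [Finsupp.single_apply, Ne.symm hk]
      have hsr : ∀ k : V, k ≠ j → s (Sum.inr k) = 0 := by
        intro k hk
        rw [hs]; simp [Finsupp.single_apply, Ne.symm hk]
      have hsrj : s (Sum.inr j) = 1 := by
        rw [hs]; simp [Finsupp.single_apply]
      have hs'i : s' (Sum.inl i) = 0 := by
        rw [hs']; simp [Finsupp.single_apply, Ne.symm hij]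
      have hs'j : s' (Sum.inl j) = 1 := by
        rw [hs']; simp [Finsupp.single_apply]
      have hs'k : ∀ k : V, k ≠ j → s' (Sum.inl k) = 0 := by
        intro k hk
        rw [hs']; simp [Finsupp.single_apply, Ne.symm hk]
      have hsle : ∀ a, s a ≤ m a := by
        intro a
        rcases a with ai | ai
        · rcases eq_or_ne ai i with rfl | hne
          · rw [hsi]; omega
          · rw [hsk ai hne]; omega
        · rcases eq_or_ne ai j with rfl | hne
          · rw [hsrj]; omega
          · rw [hsr ai hne]; omega
      have hm : m = r + s := by
        ext a
        rw [hr]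
        simp only [Finsupp.add_apply, Finsupp.tsub_apply]
        have := hsle a
        omega
      set m2 : V ⊕ V →₀ ℕ := r + s' with hm2
      have hpt : ∀ a, m2 a = m a - s a + s' a := by
        intro a
        rw [hm2, hr]
        simp only [Finsupp.add_apply, Finsupp.tsub_apply]
      -- the swap step
      have hswap : monomial m (1:K) - monomial m2 1 = monomial r 1 * bedge K i j := by
        rw [hm, hm2, bedge, mul_sub]
        rw [show (X (Sum.inl i) : MvPolynomial (V ⊕ V) K) * X (Sum.inr j) = monomial s 1 from by
          rw [hs, X, X, monomial_mul, one_mul]]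
        rw [show (X (Sum.inl j) : MvPolynomial (V ⊕ V) K) * X (Sum.inr i) = monomial s' 1 from by
          rw [hs', X, X, monomial_mul, one_mul]]
        rw [monomial_mul, monomial_mul, one_mul]
      have hswapJ : monomial m (1:K) - monomial m2 1 ∈ beIdeal K (⊤ : SimpleGraph V) := by
        rw [hswap]
        exact Ideal.mul_mem_left _ _ (bedge_mem K (by simpa using hij))
      -- Fmap is preserved
      have hF2 : Fmap m2 = Fmap m := by
        rw [hm2, hm, hs, hs']
        simp only [Fmap_add, Fmap_single, one_smul, Eexp, Sum.elim_inl, Sum.elim_inr]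
        abel
      -- coordinates of m2
      have hm2i : m2 (Sum.inl i) = m (Sum.inl i) - 1 := by
        rw [hpt, hsi, hs'i]; omega
      have hm2j : m2 (Sum.inl j) = m (Sum.inl j) + 1 := by
        rw [hpt, hsj, hs'j]; omega
      have hm2k : ∀ k : V, k ≠ i → k ≠ j → m2 (Sum.inl k) = m (Sum.inl k) := by
        intro k hki hkj
        rw [hpt, hsk k hki, hs'k k hkj]; omega
      -- measure decreases
      have hlt : (∑ k : V, (m2 (Sum.inl k) - m' (Sum.inl k))) < n := by
        rw [← hD]
        apply Finset.sum_lt_sum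
        · intro k _
          rcases eq_or_ne k i with rfl | hki
          · rw [hm2i]; omega
          · rcases eq_or_ne k j with rfl | hkj
            · rw [hm2j]; omega
            · rw [hm2k k hki hkj]
        · exact ⟨i, Finset.mem_univ i, by rw [hm2i]; omega⟩
      have hrec := IH _ hlt m2 m' rfl (hF2.trans hF)
      have : monomial m (1:K) - monomial m' 1
          = (monomial m 1 - monomial m2 1) + (monomial m2 1 - monomial m' 1) := by ring
      rw [this]
      exact add_mem hswapJ hrec
    · -- no strict excess: m = m'
      push_neg at hex
      have heq : ∀ i : V, m (Sum.inl i) = m' (Sum.inl i) := by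
        by_contra hne
        push_neg at hne
        obtain ⟨i, hi⟩ := hne
        have : ∑ k : V, m (Sum.inl k) < ∑ k : V, m' (Sum.inl k) :=
          Finset.sum_lt_sum (fun k _ => hex k) ⟨i, Finset.mem_univ i, lt_of_le_of_ne (hex i) hi⟩
        omega
      have : m = m' := by
        ext a
        rcases a with ai | ai
        · exact heq ai
        · have := hinr ai
          have h2 := heq ai
          omega
      rw [this, sub_self]
      exact zero_mem _

/-- Kernel of the toric specialization is contained in the complete-graph binomial edge ideal. -/
lemma ker_sub_J2 : ∀ (n : ℕ) (g : MvPolynomial (V ⊕ V) K), g.support.card ≤ n →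
    sepHom K (∅ : Set V) (fun _ => 0) g = 0 → g ∈ beIdeal K (⊤ : SimpleGraph V) := by
  classical
  intro n
  induction n with
  | zero =>
      intro g hg _
      have : g.support = ∅ := Finset.card_eq_zero.mp (Nat.le_zero.mp hg)
      rw [MvPolynomial.support_eq_empty.mp this]
      exact zero_mem _
  | succ n IH =>
      intro g hg h0
      by_cases hcard : g.support.card ≤ n
      · exact IH g hcard h0
      · have hpos : 0 < g.support.card := by omega
        obtain ⟨m₀, hm₀⟩ := Finset.card_pos.mp hpos
        set T : Finset (V ⊕ V →₀ ℕ) := g.support.filter (fun m => Fmap m = Fmap m₀) with hT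
        have hm₀T : m₀ ∈ T := by rw [hT]; exact Finset.mem_filter.mpr ⟨hm₀, rfl⟩
        -- fiber sum is zero
        have hsum0 : ∑ m ∈ T, coeff m g = 0 := by
          have hφ : sepHom K (∅ : Set V) (fun _ => 0) g
              = ∑ m ∈ g.support, monomial (Fmap m) (coeff m g) := by
            conv_lhs => rw [g.as_sum]
            rw [map_sum]
            exact Finset.sum_congr rfl (fun m _ => phi0_monomial K m (coeff m g))
          have hco := congrArg (coeff (Fmap m₀)) h0
          rw [hφ, coeff_sum, coeff_zero] at hco
          simp only [coeff_monomial] at hco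
          rw [hT, Finset.sum_filter]
          exact hco
        set hTp : MvPolynomial (V ⊕ V) K := ∑ m ∈ T, monomial m (coeff m g) with hTpdef
        have hTJ : hTp ∈ beIdeal K (⊤ : SimpleGraph V) := by
          have hrw : hTp = ∑ m ∈ T, C (coeff m g) * (monomial m 1 - monomial m₀ 1) := by
            rw [hTpdef]
            rw [Finset.sum_congr rfl (fun m _ => (mul_sub (C (coeff m g))
              (monomial m 1) (monomial m₀ 1)))]
            rw [Finset.sum_sub_distrib]
            have e1 : ∀ m ∈ T, C (coeff m g) * monomial m 1 = monomial m (coeff m g) := by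
              intro m _; rw [C_mul_monomial, mul_one]
            have e2 : ∑ m ∈ T, C (coeff m g) * monomial m₀ (1:K)
                = C (∑ m ∈ T, coeff m g) * monomial m₀ 1 := by
              rw [map_sum, Finset.sum_mul]
            rw [Finset.sum_congr rfl e1, e2, hsum0]
            simp
          rw [hrw]
          apply Ideal.sum_mem
          intro m hm
          apply Ideal.mul_mem_left
          have hfib : Fmap m = Fmap m₀ := (Finset.mem_filter.mp hm).2
          exact fiber_swap K _ m m₀ rfl hfib
        -- the rest of g
        set g' : MvPolynomial (V ⊕ V) K
          := ∑ m ∈ g.support.filter (fun m => ¬ (Fmap m = Fmap m₀)), monomial m (coeff m g)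
          with hg'def
        have hsplit : g = hTp + g' := by
          conv_lhs => rw [g.as_sum]
          rw [hTpdef, hg'def, hT]
          exact (Finset.sum_filter_add_sum_filter_not _ _ _).symm
        have hg'supp : g'.support ⊆ g.support.filter (fun m => ¬ (Fmap m = Fmap m₀)) := by
          rw [hg'def]
          refine (MvPolynomial.support_sum ..).trans ?_
          intro a ha
          simp only [Finset.mem_biUnion] at ha
          obtain ⟨m, hm, ha2⟩ := ha
          have := MvPolynomial.support_monomial_subset ha2
          rw [Finset.mem_singleton] at this
          rwa [this]
        have hg'card : g'.support.card ≤ n := by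
          have hsub : g.support.filter (fun m => ¬ (Fmap m = Fmap m₀)) ⊆ g.support.erase m₀ := by
            intro a ha
            rw [Finset.mem_filter] at ha
            refine Finset.mem_erase.mpr ⟨?_, ha.1⟩
            rintro rfl
            exact ha.2 rfl
          have := Finset.card_le_card (hg'supp.trans hsub)
          rw [Finset.card_erase_of_mem hm₀] at this
          omega
        have hJ2ker : beIdeal K (⊤ : SimpleGraph V)
            ≤ RingHom.ker (sepHom K (∅ : Set V) (fun _ => 0)) := by
          rw [beIdeal, Ideal.span_le]
          rintro p ⟨i, j, hij, rfl⟩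
          exact sep1' K i j (Or.inr (Or.inr rfl))
        have hg'0 : sepHom K (∅ : Set V) (fun _ => 0) g' = 0 := by
          have h1 : sepHom K (∅ : Set V) (fun _ => 0) hTp = 0 := hJ2ker hTJ
          have := congrArg (sepHom K (∅ : Set V) (fun _ => 0)) hsplit
          rw [map_add, h1, zero_add, h0] at this
          exact this.symm
        have hg'J : g' ∈ beIdeal K (⊤ : SimpleGraph V) := IH g' hg'card hg'0
        rw [hsplit]
        exact add_mem hTJ hg'J

end Kernel

section Assembly
variable {V : Type} [Fintype V] {G : SimpleGraph V}

lemma homog_zero_eq_C {σ : Type} {f : MvPolynomial σ K} (hf : f.IsHomogeneous 0) :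
    f = C (coeff 0 f) := by
  classical
  ext d
  rcases eq_or_ne d 0 with rfl | hd
  · simp
  · rw [coeff_C, if_neg (Ne.symm hd)]
    by_contra hc
    have := hf hc
    apply hd
    rw [← Finsupp.degree_eq_zero_iff d, Finsupp.degree_eq_weight_one]
    exact_mod_cast this

lemma colon_eq_ann (I : Ideal (MvPolynomial (V ⊕ V) K)) (f : MvPolynomial (V ⊕ V) K) :
    Submodule.colon I (Ideal.span {f})
      = (Submodule.span _ {(Ideal.Quotient.mk I f : MvPolynomial (V ⊕ V) K ⧸ I)}).annihilator := by
  ext r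
  rw [Ideal.mem_colon_span_singleton, Submodule.mem_annihilator_span_singleton]
  have hsm : r • (Ideal.Quotient.mk I f : MvPolynomial (V ⊕ V) K ⧸ I)
      = Ideal.Quotient.mk I (r * f) := by
    rw [← smul_eq_mul]
    exact (Submodule.Quotient.mk_smul I r f).symm
  rw [hsm, Ideal.Quotient.eq_zero_iff_mem]

lemma colon_zero (I : Ideal (MvPolynomial (V ⊕ V) K)) :
    Submodule.colon I (Ideal.span {(0 : MvPolynomial (V ⊕ V) K)}) = ⊤ := by
  rw [eq_top_iff]
  intro r _
  rw [Ideal.mem_colon_span_singleton, mul_zero]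
  exact zero_mem I

/-- The kernel inclusion for the trivial separation. -/
lemma G_ker0 : beIdeal K G ≤ RingHom.ker (sepHom K (∅ : Set V) (fun _ => 0)) := by
  rw [beIdeal, Ideal.span_le]
  rintro p ⟨i, j, _, rfl⟩
  exact sep1' K i j (Or.inr (Or.inr rfl))

open Classical in
/-- Component labels for the neighborhood separation at `t`. -/
def chiAt (t : V) : V → ℕ := fun w => if w = t then 0 else 1

lemma chiAt_self (t : V) : chiAt t t = 0 := by rw [chiAt]; simp

lemma chiAt_ne {t w : V} (h : w ≠ t) : chiAt t w = 1 := by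
  rw [chiAt]; simp [h]

/-- The kernel inclusion for the neighborhood separation at a vertex `t`. -/
lemma G_kerN (t : V) : beIdeal K G ≤ RingHom.ker
    (sepHom K (G.neighborSet t) (chiAt t)) := by
  classical
  rw [beIdeal, Ideal.span_le]
  rintro p ⟨i, j, hij, rfl⟩
  apply sep1' K i j
  by_cases hit : i = t
  · subst hit
    exact Or.inr (Or.inl (by exact hij))
  · by_cases hjt : j = t
    · subst hjt
      exact Or.inl hij.symm
    · exact Or.inr (Or.inr (by rw [chiAt_ne hit, chiAt_ne hjt]))

lemma sepN_bedge_ne (t c : V) (htc : ¬ G.Adj t c) (hct : c ≠ t) :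
    sepHom K (G.neighborSet t) (chiAt t) (bedge K t c) ≠ 0 := by
  classical
  apply sep2
  · exact fun h => G.irrefl h
  · exact fun h => htc h
  · rw [chiAt_self, chiAt_ne hct]
    exact zero_ne_one


lemma not_elim_empty (z : V ⊕ V) : z.elim (· ∉ (∅ : Set V)) (· ∉ (∅ : Set V)) := by
  cases z <;> exact Set.notMem_empty _

end Assembly

section Main
variable {V : Type} [Fintype V]

theorem statement_6' (G : SimpleGraph V) (hconn : G.Connected)
    (hcone : ¬ IsConeGraph G) (u v : V) (huv : G.Adj u v)
    (hN : G.neighborSet u ∪ G.neighborSet v = Set.univ) :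
    vNumber K (beIdeal K G) = 2 := by
  classical
  have hNadj : ∀ w : V, G.Adj u w ∨ G.Adj v w := by
    intro w
    have hw : w ∈ G.neighborSet u ∪ G.neighborSet v := by rw [hN]; trivial
    exact hw
  have hcone' : ∀ t : V, ∃ c : V, c ≠ t ∧ ¬ G.Adj t c := by
    intro t
    by_contra hno
    push_neg at hno
    exact hcone ⟨t, fun c hct => hno c hct⟩
  obtain ⟨a, ha1, ha2⟩ := hcone' u
  have hav : G.Adj v a := (hNadj a).resolve_left ha2
  obtain ⟨b, hb1, hb2⟩ := hcone' v
  have hbu : G.Adj u b := (hNadj b).resolve_right hb2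
  set φ0 := sepHom K (∅ : Set V) (fun _ => (0 : ℕ)) with hφ0
  set Sset := {d : ℕ | ∃ f : MvPolynomial (V ⊕ V) K, f.IsHomogeneous d ∧
    IsAssociatedPrime (Submodule.colon (beIdeal K G) (Ideal.span {f}))
      (MvPolynomial (V ⊕ V) K ⧸ beIdeal K G)} with hSset
  -- membership of 2
  have h2mem : 2 ∈ Sset := by
    set f2 : MvPolynomial (V ⊕ V) K := X (Sum.inl u) * X (Sum.inr v) with hf2
    set P := Submodule.colon (beIdeal K G) (Ideal.span {f2}) with hP
    have hJ2P : beIdeal K (⊤ : SimpleGraph V) ≤ P := by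
      rw [beIdeal, Ideal.span_le]
      rintro p ⟨i, j, hij, rfl⟩
      refine Ideal.mem_colon_span_singleton.mpr ?_
      rw [hf2, mul_comm]
      exact cover_mem K huv hNadj i j
    have hPker : P ≤ RingHom.ker φ0 := by
      intro g hg
      have hgf : g * f2 ∈ beIdeal K G := Ideal.mem_colon_span_singleton.mp hg
      have h0 : φ0 g * (φ0 (X (Sum.inl u)) * φ0 (X (Sum.inr v))) = 0 := by
        rw [← map_mul, ← map_mul]
        exact RingHom.mem_ker.mp (G_ker0 K hgf)
      rw [RingHom.mem_ker]
      rcases mul_eq_zero.mp h0 with h | h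
      · exact h
      · exfalso
        rcases mul_eq_zero.mp h with h' | h'
        · exact sep2X K (not_elim_empty (Sum.inl u)) h'
        · exact sep2X K (not_elim_empty (Sum.inr v)) h'
    have hkerP : RingHom.ker φ0 ≤ P :=
      fun g hg => hJ2P (ker_sub_J2 K g.support.card g le_rfl hg)
    have hPeq : P = RingHom.ker φ0 := le_antisymm hPker hkerP
    have hPprime : P.IsPrime := by rw [hPeq]; exact RingHom.ker_isPrime φ0
    refine ⟨f2, ?_, hPprime, ⟨Ideal.Quotient.mk _ f2, by
      have e : (⊥ : Submodule (MvPolynomial (V ⊕ V) K) (MvPolynomial (V ⊕ V) K ⧸ beIdeal K G)).colon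
          {Ideal.Quotient.mk _ f2} = P := by
        ext r
        have hsm : r • (Ideal.Quotient.mk (beIdeal K G) f2 : MvPolynomial (V ⊕ V) K ⧸ beIdeal K G)
            = Ideal.Quotient.mk (beIdeal K G) (r * f2) := by
          rw [← smul_eq_mul]
          exact (Submodule.Quotient.mk_smul (beIdeal K G) r f2).symm
        rw [Submodule.mem_colon_singleton, Submodule.mem_bot, hsm, hP,
          Ideal.mem_colon_span_singleton, Ideal.Quotient.eq_zero_iff_mem]
      rw [e, hPprime.radical]⟩⟩
    rw [hf2]
    exact (isHomogeneous_X K _).mul (isHomogeneous_X K _)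
  -- exclusion of 0
  have h0not : 0 ∉ Sset := by
    rintro ⟨f, hf, hassoc⟩
    have hfC : f = C (coeff 0 f) := homog_zero_eq_C K hf
    rcases eq_or_ne (coeff 0 f) 0 with hc | hc
    · rw [hfC, hc, map_zero, colon_zero] at hassoc
      exact hassoc.1.ne_top rfl
    · have hspan : Ideal.span {f} = ⊤ := by
        rw [hfC]
        exact Ideal.span_singleton_eq_top.mpr ((isUnit_iff_ne_zero.mpr hc).map C)
      rw [hspan, Submodule.top_coe, Submodule.colon_univ] at hassoc
      have hpr := hassoc.1
      have hmemJ : X (Sum.inl v) * bedge K u a ∈ beIdeal K G :=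
        x_mul_bedge_mem K huv hav.symm
      rcases hpr.mem_or_mem hmemJ with hxv | hba
      · exact sep2X K (not_elim_empty (Sum.inl v)) (RingHom.mem_ker.mp (G_ker0 K hxv))
      · exact sepN_bedge_ne K u a ha2 ha1 (RingHom.mem_ker.mp (G_kerN K u hba))
  -- exclusion of 1
  have h1not : 1 ∉ Sset := by
    rintro ⟨f, hf, hassoc⟩
    have hQprime := hassoc.1
    rcases eq_or_ne f 0 with rfl | hf0
    · rw [colon_zero] at hassoc
      exact hassoc.1.ne_top rfl
    have hsupp : f.support.Nonempty :=
      Finset.nonempty_iff_ne_empty.mpr (fun h => hf0 (MvPolynomial.support_eq_empty.mp h))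
    obtain ⟨m, hm⟩ := hsupp
    have hcm0 : coeff m f ≠ 0 := MvPolynomial.mem_support_iff.mp hm
    have hdeg : m.degree = 1 := by
      rw [Finsupp.degree_eq_weight_one]
      exact_mod_cast hf hcm0
    obtain ⟨z0, rfl⟩ := degree_eq_one m hdeg
    have hcm : coeff (Finsupp.single z0 1) f ≠ 0 := hcm0
    set w0 : V := Sum.elim id id z0 with hw0
    have hsub : beIdeal K G ≤ Submodule.colon (beIdeal K G) (Ideal.span {f}) :=
      fun g hg => Ideal.mem_colon_span_singleton.mpr (Ideal.mul_mem_right f _ hg)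
    have hXQ : ∀ z : V ⊕ V, X z ∉ Submodule.colon (beIdeal K G) (Ideal.span {f}) := by
      intro z hz
      have hmul : X z * f ∈ beIdeal K G := Ideal.mem_colon_span_singleton.mp hz
      have h0 : φ0 (X z) * φ0 f = 0 := by
        rw [← map_mul]
        exact RingHom.mem_ker.mp (G_ker0 K hmul)
      rcases mul_eq_zero.mp h0 with h | h
      · exact sep2X K (not_elim_empty z) h
      · exact sep3 K hf z0 hcm (not_elim_empty z0) h
    have hstep : ∀ t c : V, ¬ G.Adj t c → c ≠ t →
        bedge K t c ∈ Submodule.colon (beIdeal K G) (Ideal.span {f}) → G.Adj t w0 := by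
      intro t c htc hct hbQ
      have hmul : bedge K t c * f ∈ beIdeal K G := Ideal.mem_colon_span_singleton.mp hbQ
      have h0 : sepHom K (G.neighborSet t) (chiAt t) (bedge K t c)
          * sepHom K (G.neighborSet t) (chiAt t) f = 0 := by
        rw [← map_mul]
        exact RingHom.mem_ker.mp (G_kerN K t hmul)
      have hfz : sepHom K (G.neighborSet t) (chiAt t) f = 0 := by
        rcases mul_eq_zero.mp h0 with h | h
        · exact absurd h (sepN_bedge_ne K t c htc hct)
        · exact h
      by_contra hadj
      refine sep3 K hf z0 hcm ?_ hfz
      cases z0 with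
      | inl x => exact fun hmem => hadj hmem
      | inr x => exact fun hmem => hadj hmem
    have hQmem : ∀ p q r : V, G.Adj p r → G.Adj q r →
        bedge K p q ∈ Submodule.colon (beIdeal K G) (Ideal.span {f}) := by
      intro p q r hpr' hqr'
      have hmemJ : X (Sum.inl r) * bedge K p q ∈ beIdeal K G := x_mul_bedge_mem K hpr' hqr'
      rcases hQprime.mem_or_mem (hsub hmemJ) with h | h
      · exact absurd h (hXQ _)
      · exact h
    have hadjuw0 : G.Adj u w0 := hstep u a ha2 ha1 (hQmem u a v huv hav.symm)
    have hadjvw0 : G.Adj v w0 := hstep v b hb2 hb1 (hQmem v b u huv.symm hbu.symm)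
    obtain ⟨c, hc1, hc2⟩ := hcone' w0
    have hcu : c ≠ u := fun h => hc2 (h ▸ hadjuw0.symm)
    have hcv : c ≠ v := fun h => hc2 (h ▸ hadjvw0.symm)
    rcases hNadj c with hcU | hcV
    · exact G.irrefl (hstep w0 c hc2 hc1 (hQmem w0 c u hadjuw0.symm hcU.symm))
    · exact G.irrefl (hstep w0 c hc2 hc1 (hQmem w0 c v hadjvw0.symm hcV.symm))
  -- conclusion
  have hvn : vNumber K (beIdeal K G) = sInf Sset := by rw [vNumber, hSset]
  rw [hvn]
  have hne : Sset.Nonempty := ⟨2, h2mem⟩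
  have hmem := Nat.sInf_mem hne
  have hle : sInf Sset ≤ 2 := Nat.sInf_le h2mem
  have h0' : sInf Sset ≠ 0 := fun h => h0not (h ▸ hmem)
  have h1' : sInf Sset ≠ 1 := fun h => h1not (h ▸ hmem)
  omega

end Main

end AuxProof

theorem statement_6 {V : Type} [Fintype V] (G : SimpleGraph V) (hconn : G.Connected)
    (hcone : ¬ IsConeGraph G) (u v : V) (huv : G.Adj u v)
    (hN : G.neighborSet u ∪ G.neighborSet v = Set.univ) :
    vNumber K (beIdeal K G) = 2 := by
  exact statement_6' K G hconn hcone u v huv hN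

end Paper
end

section
/- For the cycle graph $C_n$ ($n\ge 1$), the v-number of its binomial edge ideal satisfies $\mathrm{v}(J_{C_n}) \le \lceil 2n/3 \rceil$. -/
open MvPolynomial

set_option synthInstance.maxHeartbeats 1000000

namespace Paper

noncomputable section

variable (K : Type) [Field K]

set_option linter.unusedSectionVars false

namespace Aux

open Finsupp

set_option linter.unusedSectionVars false

variable {V : Type} [Fintype V] [DecidableEq V] (S : Set V) [DecidablePred (· ∈ S)] (ρ : V → V)

abbrev Tgt (V : Type) := (Bool × V) ⊕ V

def gmap : V ⊕ V → MvPolynomial (Tgt V) K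
  | Sum.inl i => if i ∈ S then 0 else X (Sum.inl (false, ρ i)) * X (Sum.inr i)
  | Sum.inr i => if i ∈ S then 0 else X (Sum.inl (true, ρ i)) * X (Sum.inr i)

def phi : MvPolynomial (V ⊕ V) K →ₐ[K] MvPolynomial (Tgt V) K := aeval (gmap K S ρ)

def PP : Ideal (MvPolynomial (V ⊕ V) K) :=
  Ideal.span ({p | ∃ s ∈ S, p = X (Sum.inl s) ∨ p = X (Sum.inr s)} ∪
    {p | ∃ i j : V, i ∉ S ∧ j ∉ S ∧ ρ i = ρ j ∧ p = bedge K i j})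

def Ee : V ⊕ V → (Tgt V →₀ ℕ)
  | Sum.inl i => single (Sum.inl (false, ρ i)) 1 + single (Sum.inr i) 1
  | Sum.inr i => single (Sum.inl (true, ρ i)) 1 + single (Sum.inr i) 1

def Hh (α : (V ⊕ V) →₀ ℕ) : Tgt V →₀ ℕ := α.sum fun v k => k • Ee ρ v

def Clean (α : (V ⊕ V) →₀ ℕ) : Prop :=
  ∀ i : V, i ∈ S → α (Sum.inl i) = 0 ∧ α (Sum.inr i) = 0

lemma Hh_add (α β : (V ⊕ V) →₀ ℕ) : Hh ρ (α + β) = Hh ρ α + Hh ρ β := by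
  unfold Hh
  rw [Finsupp.sum_add_index]
  · intro v _; simp
  · intro v _ k l; rw [add_smul]

lemma Hh_single (v : V ⊕ V) (n : ℕ) : Hh ρ (single v n) = n • Ee ρ v := by
  unfold Hh
  rw [Finsupp.sum_single_index]
  simp

lemma gmap_clean (v : V ⊕ V) (hv : ∀ i, v = Sum.inl i ∨ v = Sum.inr i → i ∉ S) :
    gmap K S ρ v = monomial (Ee ρ v) 1 := by
  cases v with
  | inl i =>
      have : i ∉ S := hv i (Or.inl rfl)
      simp only [gmap, if_neg this, Ee, X]
      rw [monomial_mul, one_mul]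
  | inr i =>
      have : i ∉ S := hv i (Or.inr rfl)
      simp only [gmap, if_neg this, Ee, X]
      rw [monomial_mul, one_mul]

lemma phi_monomial_clean (α : (V ⊕ V) →₀ ℕ) (hc : Clean S α) (c : K) :
    phi K S ρ (monomial α c) = monomial (Hh ρ α) c := by
  induction α using Finsupp.induction with
  | zero =>
      simp only [Hh, Finsupp.sum_zero_index]
      rw [monomial_zero', monomial_zero']
      simp [phi]
  | single_add a n β ha hn ih =>
      have hcβ : Clean S β := by
        intro i hi
        have := hc i hi
        constructor
        · have h1 := this.1
          simp only [Finsupp.add_apply, Finsupp.single_apply, Nat.add_eq_zero] at h1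
          exact h1.2
        · have h2 := this.2
          simp only [Finsupp.add_apply, Finsupp.single_apply, Nat.add_eq_zero] at h2
          exact h2.2
      have hasafe : ∀ i, a = Sum.inl i ∨ a = Sum.inr i → i ∉ S := by
        rintro i (rfl | rfl) hiS
        · have := (hc i hiS).1
          simp only [Finsupp.add_apply, Finsupp.single_apply, if_pos rfl,
            Nat.add_eq_zero] at this
          exact hn this.1
        · have := (hc i hiS).2
          simp only [Finsupp.add_apply, Finsupp.single_apply, if_pos rfl,
            Nat.add_eq_zero] at this
          exact hn this.1
      have key : (monomial (single a n + β)) c = monomial (single a n) (1:K) * monomial β c := by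
        rw [monomial_mul, one_mul]
      rw [key, map_mul, ih hcβ, Hh_add, Hh_single]
      have : phi K S ρ (monomial (single a n) (1:K)) = monomial (n • Ee ρ a) 1 := by
        rw [phi, aeval_monomial, Finsupp.prod_single_index (by simp)]
        rw [gmap_clean K S ρ a hasafe, monomial_pow, one_pow, map_one, one_mul]
      rw [this, monomial_mul, one_mul]

lemma Hh_apply (α : (V ⊕ V) →₀ ℕ) (τ : Tgt V) :
    Hh ρ α τ = (∑ i : V, α (Sum.inl i) * Ee ρ (Sum.inl i) τ) +
      ∑ i : V, α (Sum.inr i) * Ee ρ (Sum.inr i) τ := by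
  unfold Hh
  rw [Finsupp.sum_apply]
  rw [Finsupp.sum_fintype]
  · rw [Fintype.sum_sum_type]
    simp [Finsupp.smul_apply]
  · intro v; simp

lemma Hh_inr (α : (V ⊕ V) →₀ ℕ) (i : V) :
    Hh ρ α (Sum.inr i) = α (Sum.inl i) + α (Sum.inr i) := by
  rw [Hh_apply]
  have h1 : ∀ j, Ee ρ (Sum.inl j) (Sum.inr i) = if j = i then 1 else 0 := fun j => by
    simp [Ee, Finsupp.single_apply]
  have h2 : ∀ j, Ee ρ (Sum.inr j) (Sum.inr i) = if j = i then 1 else 0 := fun j => by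
    simp [Ee, Finsupp.single_apply]
  simp only [h1, h2, mul_ite, mul_one, mul_zero]
  rw [Finset.sum_ite_eq' Finset.univ i (fun j => α (Sum.inl j)),
    Finset.sum_ite_eq' Finset.univ i (fun j => α (Sum.inr j))]
  simp

lemma Hh_ux (α : (V ⊕ V) →₀ ℕ) (c : V) :
    Hh ρ α (Sum.inl (false, c)) = ∑ j : V, if ρ j = c then α (Sum.inl j) else 0 := by
  rw [Hh_apply]
  have h1 : ∀ j : V, Ee ρ (Sum.inl j) (Sum.inl (false, c)) = if ρ j = c then 1 else 0 := by
    intro j; simp [Ee, Finsupp.single_apply, Prod.ext_iff]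
  have h2 : ∀ j : V, Ee ρ (Sum.inr j) (Sum.inl (false, c)) = 0 := by
    intro j; simp [Ee, Finsupp.single_apply, Prod.ext_iff]
  simp only [h1, h2, mul_ite, mul_one, mul_zero]
  simp

def dist (α β : (V ⊕ V) →₀ ℕ) : ℕ := ∑ v : V ⊕ V, ((α v - β v) + (β v - α v))

omit [DecidableEq V] in
lemma dist_comm (α β : (V ⊕ V) →₀ ℕ) : dist α β = dist β α := by
  unfold dist
  exact Finset.sum_congr rfl fun v _ => by omega

omit [DecidableEq V] in
lemma dist_eq_zero {α β : (V ⊕ V) →₀ ℕ} (h : dist α β = 0) : α = β := by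
  ext v
  have := Finset.sum_eq_zero_iff.mp h v (Finset.mem_univ v)
  omega

lemma bedge_mem_PP (i j : V) (hi : i ∉ S) (hj : j ∉ S) (hρ : ρ i = ρ j) :
    bedge K i j ∈ PP K S ρ :=
  Ideal.subset_span (Or.inr ⟨i, j, hi, hj, hρ, rfl⟩)

lemma exchange_aux (α β : (V ⊕ V) →₀ ℕ) (hα : Clean S α) (hβ : Clean S β)
    (hH : Hh ρ α = Hh ρ β) (i : V) (hgt : β (Sum.inl i) < α (Sum.inl i)) :
    ∃ α' : (V ⊕ V) →₀ ℕ, Clean S α' ∧ Hh ρ α' = Hh ρ α ∧ dist α' β < dist α β ∧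
      monomial α (1:K) - monomial α' 1 ∈ PP K S ρ := by
  -- find j in the same fiber with α < β
  have hsum : (∑ j : V, if ρ j = ρ i then α (Sum.inl j) else 0) =
      ∑ j : V, if ρ j = ρ i then β (Sum.inl j) else 0 := by
    rw [← Hh_ux, ← Hh_ux, hH]
  have hj' : ∃ j : V, ρ j = ρ i ∧ α (Sum.inl j) < β (Sum.inl j) := by
    by_contra hcon
    push_neg at hcon
    have : (∑ j : V, if ρ j = ρ i then β (Sum.inl j) else 0) <
        ∑ j : V, if ρ j = ρ i then α (Sum.inl j) else 0 := by
      apply Finset.sum_lt_sum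
      · intro j _
        by_cases h : ρ j = ρ i
        · simp only [if_pos h]
          exact hcon j h
        · simp [h]
      · exact ⟨i, Finset.mem_univ i, by simp [hgt]⟩
    omega
  obtain ⟨j, hρij, hlt⟩ := hj'
  have hij : i ≠ j := fun h => by subst h; omega
  have hiS : i ∉ S := fun h => by have := (hα i h).1; omega
  have hjS : j ∉ S := fun h => by have := (hβ j h).1; omega
  have hti : α (Sum.inl i) + α (Sum.inr i) = β (Sum.inl i) + β (Sum.inr i) := by
    rw [← Hh_inr ρ α i, ← Hh_inr ρ β i, hH]
  have htj : α (Sum.inl j) + α (Sum.inr j) = β (Sum.inl j) + β (Sum.inr j) := by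
    rw [← Hh_inr ρ α j, ← Hh_inr ρ β j, hH]
  have hyi : α (Sum.inr i) < β (Sum.inr i) := by omega
  have hyj : β (Sum.inr j) < α (Sum.inr j) := by omega
  set δ : (V ⊕ V) →₀ ℕ := α - Finsupp.single (Sum.inl i) 1 - Finsupp.single (Sum.inr j) 1 with hδ
  have hdecomp : δ + Finsupp.single (Sum.inl i) 1 + Finsupp.single (Sum.inr j) 1 = α := by
    ext v
    simp only [hδ, Finsupp.add_apply, Finsupp.tsub_apply, Finsupp.single_apply]
    rcases v with vi | vi
    · by_cases h : vi = i
      · subst h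
        rw [if_pos rfl, if_neg (by simp : ¬ ((Sum.inr j : V ⊕ V) = Sum.inl vi))]
        omega
      · rw [if_neg (by simp [Ne.symm h] : ¬ ((Sum.inl i : V ⊕ V) = Sum.inl vi)),
          if_neg (by simp : ¬ ((Sum.inr j : V ⊕ V) = Sum.inl vi))]
        omega
    · by_cases h : vi = j
      · subst h
        rw [if_neg (by simp : ¬ ((Sum.inl i : V ⊕ V) = Sum.inr vi)), if_pos rfl]
        omega
      · rw [if_neg (by simp : ¬ ((Sum.inl i : V ⊕ V) = Sum.inr vi)),
          if_neg (by simp [Ne.symm h] : ¬ ((Sum.inr j : V ⊕ V) = Sum.inr vi))]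
        omega
  set α' : (V ⊕ V) →₀ ℕ := δ + Finsupp.single (Sum.inl j) 1 + Finsupp.single (Sum.inr i) 1
    with hα'
  have hδval : ∀ v, δ v = α v - (if v = Sum.inl i then 1 else 0) -
      (if v = Sum.inr j then 1 else 0) := by
    intro v
    simp only [hδ, Finsupp.tsub_apply, Finsupp.single_apply]
    congr 1 <;> [congr 1; skip] <;> simp [eq_comm]
  have hα'val : ∀ v, α' v = α v - (if v = Sum.inl i then 1 else 0) -
      (if v = Sum.inr j then 1 else 0) + (if v = Sum.inl j then 1 else 0) +
      (if v = Sum.inr i then 1 else 0) := by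
    intro v
    simp only [hα', Finsupp.add_apply, Finsupp.single_apply]
    rw [hδval v]
    congr 2 <;> simp [eq_comm]
  refine ⟨α', ?_, ?_, ?_, ?_⟩
  · intro m hm
    constructor
    · rw [hα'val]
      have h1 : (Sum.inl m : V ⊕ V) ≠ Sum.inl j := by simp; rintro rfl; exact hjS hm
      have h2 : (Sum.inl m : V ⊕ V) ≠ Sum.inr i := by simp
      simp [h1, h2, (hα m hm).1]
    · rw [hα'val]
      have h1 : (Sum.inr m : V ⊕ V) ≠ Sum.inl j := by simp
      have h2 : (Sum.inr m : V ⊕ V) ≠ Sum.inr i := by simp; rintro rfl; exact hiS hm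
      simp [h1, h2, (hα m hm).2]
  · rw [hα', ← hdecomp]
    rw [Hh_add, Hh_add, Hh_add, Hh_add, Hh_single, Hh_single, Hh_single, Hh_single]
    have : Ee ρ (Sum.inl j) + Ee ρ (Sum.inr i) = Ee ρ (Sum.inl i) + Ee ρ (Sum.inr j) := by
      simp only [Ee, hρij]
      abel
    rw [one_smul, one_smul, one_smul, one_smul, add_assoc, add_assoc, this]
  · unfold dist
    apply Finset.sum_lt_sum
    · intro v _
      rw [hα'val v]
      have h1 : α (Sum.inl i) ≥ 1 := by omega
      have h2 : α (Sum.inr j) ≥ 1 := by omega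
      rcases v with vi | vi
      · simp only [Sum.inl.injEq, Sum.inr.injEq, reduceCtorEq, if_false]
        by_cases hvi : vi = i
        · rw [if_pos hvi, if_neg (by rw [hvi]; exact hij)]
          rw [hvi]
          omega
        · by_cases hvj : vi = j
          · rw [if_neg hvi, if_pos hvj, hvj]
            omega
          · rw [if_neg hvi, if_neg hvj]
            omega
      · simp only [Sum.inl.injEq, Sum.inr.injEq, reduceCtorEq, if_false]
        by_cases hvj : vi = j
        · rw [if_pos hvj, if_neg (by rw [hvj]; exact Ne.symm hij)]
          rw [hvj]
          omega
        · by_cases hvi : vi = i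
          · rw [if_neg hvj, if_pos hvi, hvi]
            omega
          · rw [if_neg hvj, if_neg hvi]
            omega
    · refine ⟨Sum.inl i, Finset.mem_univ _, ?_⟩
      rw [hα'val]
      simp only [Sum.inl.injEq, Sum.inr.injEq, reduceCtorEq, if_false]
      rw [if_pos trivial, if_neg hij]
      omega
  · have hkey : monomial α (1:K) - monomial α' 1 = monomial δ 1 * bedge K i j := by
      rw [bedge, mul_sub]
      have e1 : (X (Sum.inl i) : MvPolynomial (V ⊕ V) K) * X (Sum.inr j) =
          monomial (Finsupp.single (Sum.inl i) 1 + Finsupp.single (Sum.inr j) 1) 1 := by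
        rw [X, X, monomial_mul, one_mul]
      have e2 : (X (Sum.inl j) : MvPolynomial (V ⊕ V) K) * X (Sum.inr i) =
          monomial (Finsupp.single (Sum.inl j) 1 + Finsupp.single (Sum.inr i) 1) 1 := by
        rw [X, X, monomial_mul, one_mul]
      rw [e1, e2, monomial_mul, monomial_mul, one_mul]
      rw [← add_assoc, hdecomp, ← add_assoc, ← hα']
    rw [hkey]
    exact Ideal.mul_mem_left _ _ (bedge_mem_PP K S ρ i j hiS hjS (hρij.symm))

lemma exchange (N : ℕ) : ∀ α β : (V ⊕ V) →₀ ℕ, dist α β ≤ N → Clean S α → Clean S β →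
    Hh ρ α = Hh ρ β → monomial α (1:K) - monomial β 1 ∈ PP K S ρ := by
  induction N with
  | zero =>
      intro α β hd _ _ _
      have : α = β := dist_eq_zero (Nat.le_zero.mp hd)
      rw [this, sub_self]
      exact Ideal.zero_mem _
  | succ N ih =>
      intro α β hd hα hβ hH
      by_cases heq : α = β
      · rw [heq, sub_self]; exact Ideal.zero_mem _
      · have hex : ∃ i : V, α (Sum.inl i) ≠ β (Sum.inl i) := by
          by_contra hcon
          push_neg at hcon
          apply heq
          ext v
          rcases v with vi | vi
          · exact hcon vi
          · have := hcon vi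
            have h2 : α (Sum.inl vi) + α (Sum.inr vi) = β (Sum.inl vi) + β (Sum.inr vi) := by
              rw [← Hh_inr ρ α vi, ← Hh_inr ρ β vi, hH]
            omega
        obtain ⟨i, hne⟩ := hex
        rcases Nat.lt_or_ge (β (Sum.inl i)) (α (Sum.inl i)) with hgt | hge
        · obtain ⟨α', hc', hH', hd', hm'⟩ := exchange_aux K S ρ α β hα hβ hH i hgt
          have : monomial α (1:K) - monomial β 1 =
              (monomial α 1 - monomial α' 1) + (monomial α' 1 - monomial β 1) := by ring
          rw [this]
          exact Ideal.add_mem _ hm' (ih α' β (by omega) hc' hβ (hH'.trans hH))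
        · have hgt' : α (Sum.inl i) < β (Sum.inl i) := by omega
          obtain ⟨β', hc', hH', hd', hm'⟩ := exchange_aux K S ρ β α hβ hα hH.symm i hgt'
          have : monomial α (1:K) - monomial β 1 =
              (monomial α 1 - monomial β' 1) - (monomial β 1 - monomial β' 1) := by ring
          rw [this]
          refine Ideal.sub_mem _ (ih α β' ?_ hα hc' (hH.trans hH'.symm)) hm'
          rw [dist_comm] at hd ⊢
          omega

lemma X_mem_PP_left {s : V} (hs : s ∈ S) : (X (Sum.inl s) : MvPolynomial (V ⊕ V) K) ∈ PP K S ρ :=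
  Ideal.subset_span (Or.inl ⟨s, hs, Or.inl rfl⟩)

lemma X_mem_PP_right {s : V} (hs : s ∈ S) : (X (Sum.inr s) : MvPolynomial (V ⊕ V) K) ∈ PP K S ρ :=
  Ideal.subset_span (Or.inl ⟨s, hs, Or.inr rfl⟩)

omit [Fintype V] in
lemma monomial_factor (m : (V ⊕ V) →₀ ℕ) (v : V ⊕ V) (h : 1 ≤ m v) (c : K) :
    monomial m c = monomial (m - Finsupp.single v 1) c * X v := by
  have hms : (m - Finsupp.single v 1) + Finsupp.single v 1 = m := by
    ext w
    rw [Finsupp.add_apply, Finsupp.tsub_apply, Finsupp.single_apply]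
    by_cases hw : v = w
    · subst hw
      rw [if_pos rfl]
      omega
    · rw [if_neg hw]
      omega
  rw [X, monomial_mul, mul_one, hms]

omit [Fintype V] in
lemma phi_monomial_unclean (m : (V ⊕ V) →₀ ℕ) (c : K) (v : V ⊕ V) (hv : 1 ≤ m v)
    (hzero : gmap K S ρ v = 0) : phi K S ρ (monomial m c) = 0 := by
  rw [phi, aeval_monomial]
  have : (m.prod fun w e => gmap K S ρ w ^ e) = 0 := by
    apply Finset.prod_eq_zero (Finsupp.mem_support_iff.mpr (by omega : m v ≠ 0))
    have : gmap K S ρ v ^ m v = 0 := by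
      rw [hzero]
      exact zero_pow (by omega)
    exact this
  rw [this, mul_zero]

lemma ker_phi_subset_PP (p : MvPolynomial (V ⊕ V) K) (hp : phi K S ρ p = 0) :
    p ∈ PP K S ρ := by
  generalize hN : p.support.card = N
  induction N using Nat.strong_induction_on generalizing p with
  | _ N ih =>
  by_cases hp0 : p = 0
  · rw [hp0]; exact Ideal.zero_mem _
  by_cases hun : ∃ m ∈ p.support, ¬ Clean S m
  · -- strip an unclean monomial
    obtain ⟨m, hm, hmc⟩ := hun
    unfold Clean at hmc
    push_neg at hmc
    obtain ⟨i, hiS, hior⟩ := hmc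
    have hvex : ∃ v : V ⊕ V, 1 ≤ m v ∧ gmap K S ρ v = 0 ∧
        (X v : MvPolynomial (V ⊕ V) K) ∈ PP K S ρ := by
      rcases Nat.eq_zero_or_pos (m (Sum.inl i)) with h | h
      · refine ⟨Sum.inr i, by omega, ?_, X_mem_PP_right K S ρ hiS⟩
        simp [gmap, hiS]
      · refine ⟨Sum.inl i, h, ?_, X_mem_PP_left K S ρ hiS⟩
        simp [gmap, hiS]
    obtain ⟨v, hv1, hvz, hvP⟩ := hvex
    set c := coeff m p with hc
    have hcne : c ≠ 0 := MvPolynomial.mem_support_iff.mp hm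
    set q := p - monomial m c with hq
    have hqsupp : q.support ⊆ p.support.erase m := by
      intro w hw
      rw [MvPolynomial.mem_support_iff] at hw
      rw [Finset.mem_erase, MvPolynomial.mem_support_iff]
      have : coeff w q = coeff w p - (if m = w then c else 0) := by
        rw [hq, MvPolynomial.coeff_sub, MvPolynomial.coeff_monomial]
      by_cases hwm : w = m
      · subst hwm
        rw [if_pos rfl] at this
        simp [hc] at this
        exact absurd this hw
      · rw [if_neg (Ne.symm hwm)] at this
        simp only [sub_zero] at this
        exact ⟨hwm, by rw [← this]; exact hw⟩
    have hqphi : phi K S ρ q = 0 := by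
      rw [hq, map_sub, hp, phi_monomial_unclean K S ρ m c v hv1 hvz, sub_zero]
    have hqcard : q.support.card < N := by
      calc q.support.card ≤ (p.support.erase m).card := Finset.card_le_card hqsupp
      _ < p.support.card := Finset.card_erase_lt_of_mem hm
      _ = N := hN
    have hqmem : q ∈ PP K S ρ := ih _ hqcard q hqphi rfl
    have : p = q + monomial m c := by rw [hq]; ring
    rw [this]
    refine Ideal.add_mem _ hqmem ?_
    rw [monomial_factor K m v hv1 c]
    exact Ideal.mul_mem_left _ _ hvP
  · -- all monomials clean
    push_neg at hun
    obtain ⟨m, hm⟩ := MvPolynomial.support_nonempty.mpr hp0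
    set c := coeff m p with hc
    have hcne : c ≠ 0 := MvPolynomial.mem_support_iff.mp hm
    have hphip : ∑ w ∈ p.support, (if Hh ρ w = Hh ρ m then coeff w p else 0) = 0 := by
      have h1 : phi K S ρ p = ∑ w ∈ p.support, monomial (Hh ρ w) (coeff w p) := by
        conv_lhs => rw [← MvPolynomial.support_sum_monomial_coeff p]
        rw [map_sum]
        exact Finset.sum_congr rfl fun w hw => phi_monomial_clean K S ρ w (hun w hw) _
      have h2 := congrArg (coeff (Hh ρ m)) (h1.symm.trans hp)
      rw [MvPolynomial.coeff_sum] at h2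
      simp only [MvPolynomial.coeff_monomial, MvPolynomial.coeff_zero] at h2
      exact h2
    have hex : ∃ m' ∈ p.support, m' ≠ m ∧ Hh ρ m' = Hh ρ m := by
      by_contra hcon
      push_neg at hcon
      have := Finset.sum_eq_single_of_mem
        (f := fun w => if Hh ρ w = Hh ρ m then coeff w p else 0) m hm
        (fun w hw hwm => if_neg (hcon w hw hwm))
      rw [this] at hphip
      simp only [if_pos rfl] at hphip
      exact hcne hphip
    obtain ⟨m', hm', hm'ne, hm'H⟩ := hex
    set q := p - (monomial m c - monomial m' c) with hq
    have hqsupp : q.support ⊆ p.support.erase m := by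
      intro w hw
      rw [MvPolynomial.mem_support_iff] at hw
      rw [Finset.mem_erase, MvPolynomial.mem_support_iff]
      have hval : coeff w q = coeff w p - ((if m = w then c else 0) - (if m' = w then c else 0)) := by
        rw [hq, MvPolynomial.coeff_sub, MvPolynomial.coeff_sub, MvPolynomial.coeff_monomial,
          MvPolynomial.coeff_monomial]
      by_cases hwm : w = m
      · exfalso
        rw [if_pos hwm.symm, if_neg (fun h => hm'ne (h.trans hwm)), hwm] at hval
        simp [hc] at hval
        exact hw (hwm ▸ hval)
      · refine ⟨hwm, ?_⟩
        by_cases hwm' : w = m'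
        · rw [hwm']
          exact MvPolynomial.mem_support_iff.mp hm'
        · rw [if_neg (fun h => hwm h.symm), if_neg (fun h => hwm' h.symm)] at hval
          simp only [sub_zero] at hval
          rw [← hval]
          exact hw
    have hqphi : phi K S ρ q = 0 := by
      rw [hq, map_sub, map_sub, hp,
        phi_monomial_clean K S ρ m (hun m hm) c,
        phi_monomial_clean K S ρ m' (hun m' hm') c, hm'H, sub_self, zero_sub, neg_zero]
    have hqcard : q.support.card < N := by
      calc q.support.card ≤ (p.support.erase m).card := Finset.card_le_card hqsupp
      _ < p.support.card := Finset.card_erase_lt_of_mem hm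
      _ = N := hN
    have hqmem : q ∈ PP K S ρ := ih _ hqcard q hqphi rfl
    have hdiff : monomial m c - monomial m' c ∈ PP K S ρ := by
      have hb := exchange K S ρ (dist m m') m m' le_rfl (hun m hm) (hun m' hm') hm'H.symm
      have : monomial m c - monomial m' c = C c * (monomial m (1:K) - monomial m' 1) := by
        rw [mul_sub, C_mul_monomial, C_mul_monomial, mul_one]
      rw [this]
      exact Ideal.mul_mem_left _ _ hb
    have : p = q + (monomial m c - monomial m' c) := by rw [hq]; ring
    rw [this]
    exact Ideal.add_mem _ hqmem hdiff

lemma master {V : Type} [Fintype V] [DecidableEq V] (G : SimpleGraph V)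
    (S : Set V) [DecidablePred (· ∈ S)] (ρ : V → V)
    (f : MvPolynomial (V ⊕ V) K) (d : ℕ)
    (hf : f.IsHomogeneous d)
    (hedge : ∀ i j : V, G.Adj i j → phi K S ρ (bedge K i j) = 0)
    (hxs : ∀ s ∈ S, X (Sum.inl s) * f ∈ beIdeal K G ∧ X (Sum.inr s) * f ∈ beIdeal K G)
    (hbe : ∀ i j : V, i ∉ S → j ∉ S → ρ i = ρ j → bedge K i j * f ∈ beIdeal K G)
    (hfne : phi K S ρ f ≠ 0) :
    vNumber K (beIdeal K G) ≤ d := by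
  set J := beIdeal K G with hJ
  have hJker : ∀ p ∈ J, phi K S ρ p = 0 := by
    intro p hpJ
    have hle : J ≤ RingHom.ker (phi K S ρ).toRingHom := by
      rw [hJ, beIdeal, Ideal.span_le]
      rintro q ⟨i, j, hadj, rfl⟩
      exact hedge i j hadj
    exact hle hpJ
  have hPf : ∀ r ∈ PP K S ρ, r * f ∈ J := by
    intro r hr
    refine Submodule.span_induction ?_ ?_ ?_ ?_ hr
    · rintro q (⟨s, hs, (rfl | rfl)⟩ | ⟨i, j, hi, hj, hρ, rfl⟩)
      · exact (hxs s hs).1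
      · exact (hxs s hs).2
      · exact hbe i j hi hj hρ
    · rw [zero_mul]; exact Ideal.zero_mem _
    · intro a b _ _ ha hb
      rw [add_mul]
      exact Ideal.add_mem _ ha hb
    · intro a b _ hb
      rw [smul_eq_mul, mul_assoc]
      exact Ideal.mul_mem_left _ _ hb
  have hcolon : Submodule.colon J (Ideal.span {f}) = RingHom.ker (phi K S ρ).toRingHom := by
    apply le_antisymm
    · intro r hr
      have hrf : r * f ∈ J := Ideal.mem_colon_span_singleton.mp hr
      have : phi K S ρ r * phi K S ρ f = 0 := by
        rw [← map_mul]
        exact hJker _ hrf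
      rcases mul_eq_zero.mp this with h | h
      · exact h
      · exact absurd h hfne
    · intro r hr
      have hrP : r ∈ PP K S ρ := ker_phi_subset_PP K S ρ r hr
      exact Ideal.mem_colon_span_singleton.mpr (hPf r hrP)
  have hprime : (Submodule.colon J (Ideal.span {f})).IsPrime := by
    rw [hcolon]
    exact RingHom.ker_isPrime _
  have hassoc : IsAssociatedPrime (Submodule.colon J (Ideal.span {f}))
      (MvPolynomial (V ⊕ V) K ⧸ J) := by
    refine isAssociatedPrime_iff.mpr ⟨hprime, Submodule.Quotient.mk f, ?_⟩
    ext r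
    rw [Submodule.mem_colon_singleton, ← Submodule.Quotient.mk_smul, Submodule.mem_bot,
      Submodule.Quotient.mk_eq_zero, Ideal.mem_colon_span_singleton, smul_eq_mul]
  exact Nat.sInf_le ⟨f, hf, hassoc⟩

section Helpers

open SimpleGraph

lemma bedge_self (i : V) : bedge K i i = (0 : MvPolynomial (V ⊕ V) K) := sub_self _

omit [Fintype V] [DecidableEq V] in
lemma bedge_swap (i j : V) : bedge K i j = - bedge K j i := by unfold bedge; ring

omit [Fintype V] [DecidableEq V] in
lemma bedge_mem {G : SimpleGraph V} {i j : V} (h : G.Adj i j) :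
    bedge K i j ∈ beIdeal K G :=
  Ideal.subset_span ⟨i, j, h, rfl⟩

omit [Fintype V] [DecidableEq V] in
lemma bedge_hom (i j : V) : (bedge K i j).IsHomogeneous 2 := by
  rw [← mem_homogeneousSubmodule]
  apply sub_mem
  · rw [mem_homogeneousSubmodule]
    exact (isHomogeneous_X K (Sum.inl i)).mul (isHomogeneous_X K (Sum.inr j))
  · rw [mem_homogeneousSubmodule]
    exact (isHomogeneous_X K (Sum.inl j)).mul (isHomogeneous_X K (Sum.inr i))

omit [Fintype V] [DecidableEq V] in
lemma path_x {G : SimpleGraph V} {a s b : V} (h1 : G.Adj a s) (h2 : G.Adj s b) :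
    X (Sum.inl s) * bedge K a b ∈ beIdeal K G := by
  have : X (Sum.inl s) * bedge K a b =
      X (Sum.inl a) * bedge K s b + X (Sum.inl b) * bedge K a s := by
    unfold bedge; ring
  rw [this]
  exact Ideal.add_mem _ (Ideal.mul_mem_left _ _ (bedge_mem K h2))
    (Ideal.mul_mem_left _ _ (bedge_mem K h1))

omit [Fintype V] [DecidableEq V] in
lemma path_y {G : SimpleGraph V} {a s b : V} (h1 : G.Adj a s) (h2 : G.Adj s b) :
    X (Sum.inr s) * bedge K a b ∈ beIdeal K G := by
  have : X (Sum.inr s) * bedge K a b =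
      X (Sum.inr a) * bedge K s b + X (Sum.inr b) * bedge K a s := by
    unfold bedge; ring
  rw [this]
  exact Ideal.add_mem _ (Ideal.mul_mem_left _ _ (bedge_mem K h2))
    (Ideal.mul_mem_left _ _ (bedge_mem K h1))

lemma phi_bedge (i j : V) : phi K S ρ (bedge K i j) =
    gmap K S ρ (Sum.inl i) * gmap K S ρ (Sum.inr j) -
      gmap K S ρ (Sum.inl j) * gmap K S ρ (Sum.inr i) := by
  rw [bedge, map_sub, map_mul, map_mul, phi]
  simp [aeval_X]

lemma phi_bedge_zero (i j : V) (h : i ∈ S ∨ j ∈ S ∨ ρ i = ρ j) :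
    phi K S ρ (bedge K i j) = 0 := by
  rw [phi_bedge]
  by_cases hi : i ∈ S
  · simp [gmap, hi]
  by_cases hj : j ∈ S
  · simp [gmap, hj]
  rcases h with h | h | h
  · exact absurd h hi
  · exact absurd h hj
  · simp only [gmap, if_neg hi, if_neg hj, h]
    ring

lemma phi_bedge_ne (i j : V) (hi : i ∉ S) (hj : j ∉ S) (hρ : ρ i ≠ ρ j) :
    phi K S ρ (bedge K i j) ≠ 0 := by
  rw [phi_bedge]
  simp only [gmap, if_neg hi, if_neg hj]
  have e1 : (X (Sum.inl (false, ρ i)) * X (Sum.inr i) : MvPolynomial (Tgt V) K) *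
      (X (Sum.inl (true, ρ j)) * X (Sum.inr j)) =
      monomial (Finsupp.single (Sum.inl (false, ρ i)) 1 + Finsupp.single (Sum.inr i) 1 +
        (Finsupp.single (Sum.inl (true, ρ j)) 1 + Finsupp.single (Sum.inr j) 1)) 1 := by
    rw [X, X, X, X, monomial_mul, monomial_mul, monomial_mul]
    norm_num
  have e2 : (X (Sum.inl (false, ρ j)) * X (Sum.inr j) : MvPolynomial (Tgt V) K) *
      (X (Sum.inl (true, ρ i)) * X (Sum.inr i)) =
      monomial (Finsupp.single (Sum.inl (false, ρ j)) 1 + Finsupp.single (Sum.inr j) 1 +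
        (Finsupp.single (Sum.inl (true, ρ i)) 1 + Finsupp.single (Sum.inr i) 1)) 1 := by
    rw [X, X, X, X, monomial_mul, monomial_mul, monomial_mul]
    norm_num
  rw [e1, e2]
  intro hzero
  have hne : (Finsupp.single (Sum.inl (false, ρ i)) 1 + Finsupp.single (Sum.inr i) 1 +
      (Finsupp.single (Sum.inl (true, ρ j)) 1 + Finsupp.single (Sum.inr j) 1) :
        Tgt V →₀ ℕ) ≠
      Finsupp.single (Sum.inl (false, ρ j)) 1 + Finsupp.single (Sum.inr j) 1 +
        (Finsupp.single (Sum.inl (true, ρ i)) 1 + Finsupp.single (Sum.inr i) 1) := by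
    intro heq
    have h2 := congrArg (fun g : Tgt V →₀ ℕ => g (Sum.inl (false, ρ i))) heq
    simp [Finsupp.single_apply, Ne.symm hρ] at h2
  have := congrArg (coeff (Finsupp.single (Sum.inl (false, ρ i)) 1 +
    Finsupp.single (Sum.inr i) 1 +
    (Finsupp.single (Sum.inl (true, ρ j)) 1 + Finsupp.single (Sum.inr j) 1))) hzero
  rw [MvPolynomial.coeff_sub, MvPolynomial.coeff_monomial, MvPolynomial.coeff_monomial,
    if_pos rfl, if_neg (fun h => hne h.symm)] at this
  simpa using this

lemma phi_X_ne (i : V) (hi : i ∉ S) : phi K S ρ (X (Sum.inl i)) ≠ 0 := by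
  have : phi K S ρ (X (Sum.inl i)) = gmap K S ρ (Sum.inl i) := by
    rw [phi, aeval_X]
  rw [this]
  simp only [gmap, if_neg hi]
  exact mul_ne_zero (X_ne_zero _) (X_ne_zero _)

end Helpers

section Cycle

open SimpleGraph

lemma sub_val_one {n : ℕ} (hn : 2 ≤ n) (u v : Fin n) (h : (u - v).val = 1) :
    v.val + 1 = u.val ∨ (v.val = n - 1 ∧ u.val = 0) := by
  rw [Fin.sub_def] at h
  simp only at h
  have hu := u.isLt
  have hv := v.isLt
  rcases Nat.lt_or_ge (n - v.val + u.val) n with hlt | hge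
  · rw [Nat.mod_eq_of_lt hlt] at h
    omega
  · rw [Nat.mod_eq_sub_mod hge, Nat.mod_eq_of_lt (by omega)] at h
    omega

lemma adj_elim {n : ℕ} (hn : 2 ≤ n) {u v : Fin n} (h : (cycleGraph n).Adj u v) :
    u.val + 1 = v.val ∨ v.val + 1 = u.val ∨ (u.val = n - 1 ∧ v.val = 0) ∨
      (v.val = n - 1 ∧ u.val = 0) := by
  rw [cycleGraph_adj'] at h
  rcases h with h | h
  · rcases sub_val_one hn u v h with h1 | h1
    · right; left; exact h1
    · right; right; right; exact h1
  · rcases sub_val_one hn v u h with h1 | h1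
    · left; exact h1
    · right; right; left; exact h1

lemma adj_of_succ {n : ℕ} (hn : 2 ≤ n) {u v : Fin n} (h : u.val + 1 = v.val) :
    (cycleGraph n).Adj u v := by
  rw [cycleGraph_adj']
  right
  rw [Fin.sub_def]
  simp only
  have hv := v.isLt
  have hu := u.isLt
  have : n - u.val + v.val = n + 1 := by omega
  rw [this, Nat.mod_eq_sub_mod (by omega), Nat.mod_eq_of_lt (by omega)]
  omega

lemma adj_wrap {n : ℕ} (hn : 2 ≤ n) {u v : Fin n} (hu : u.val = n - 1) (hv : v.val = 0) :
    (cycleGraph n).Adj u v := by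
  rw [cycleGraph_adj']
  right
  rw [Fin.sub_def]
  simp only
  rw [hu, hv]
  have : n - (n - 1) + 0 = 1 := by omega
  rw [this, Nat.mod_eq_of_lt (by omega)]

end Cycle

section Cases

open SimpleGraph

lemma case_small {n : ℕ} (hn : 1 ≤ n)
    (hcomp : ∀ i j : Fin n, i ≠ j → (cycleGraph n).Adj i j) :
    vNumber K (beIdeal K (cycleGraph n)) ≤ 0 := by
  letI : DecidablePred (· ∈ (∅ : Set (Fin n))) := fun x => Decidable.isFalse (Set.notMem_empty x)
  refine master K (cycleGraph n) (∅ : Set (Fin n)) (fun _ => ⟨0, hn⟩) 1 0 ?_ ?_ ?_ ?_ ?_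
  · exact isHomogeneous_one _ _
  · intro i j _
    exact phi_bedge_zero K _ _ i j (Or.inr (Or.inr rfl))
  · intro s hs
    exact absurd hs (Set.notMem_empty s)
  · intro i j _ _ _
    by_cases hij : i = j
    · subst hij
      rw [bedge_self, zero_mul]
      exact Ideal.zero_mem _
    · rw [mul_one]
      exact bedge_mem K (hcomp i j hij)
  · rw [map_one]
    exact one_ne_zero

lemma case_four :
    vNumber K (beIdeal K (cycleGraph 4)) ≤ 2 := by
  have hn2 : (2:ℕ) ≤ 4 := by omega
  set S : Set (Fin 4) := {i | i.val = 0 ∨ i.val = 2} with hS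
  letI : DecidablePred (· ∈ S) := fun i => (inferInstance : Decidable (i.val = 0 ∨ i.val = 2))
  refine master K (cycleGraph 4) S id (bedge K ⟨1, by omega⟩ ⟨3, by omega⟩) 2
    (bedge_hom K _ _) ?_ ?_ ?_ ?_
  · intro i j hadj
    apply phi_bedge_zero
    have h := adj_elim hn2 hadj
    have hi := i.isLt
    have hj := j.isLt
    simp only [hS, Set.mem_setOf_eq, id_eq, Fin.ext_iff]
    omega
  · intro s hs
    have hadj1 : (cycleGraph 4).Adj ⟨1, by omega⟩ s ∧ (cycleGraph 4).Adj s ⟨3, by omega⟩ := by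
      rcases hs with h0 | h2
      · exact ⟨(adj_of_succ hn2 (by simp [h0])).symm, (adj_wrap hn2 (by simp) h0).symm⟩
      · exact ⟨adj_of_succ hn2 (by simp [h2]), adj_of_succ hn2 (by simp [h2])⟩
    exact ⟨path_x K hadj1.1 hadj1.2, path_y K hadj1.1 hadj1.2⟩
  · intro i j _ _ hρ
    simp only [id_eq] at hρ
    subst hρ
    rw [bedge_self, zero_mul]
    exact Ideal.zero_mem _
  · apply phi_bedge_ne
    · simp only [hS, Set.mem_setOf_eq]
      omega
    · simp only [hS, Set.mem_setOf_eq]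
      omega
    · simp only [id_eq, ne_eq, Fin.mk.injEq]
      omega

lemma case_r0 (k : ℕ) (hk : 2 ≤ k) :
    vNumber K (beIdeal K (cycleGraph (3*k))) ≤ 2*k := by
  have hn2 : 2 ≤ 3*k := by omega
  set S : Set (Fin (3*k)) := {i | i.val % 3 = 2} with hS
  letI : DecidablePred (· ∈ S) := fun i => (inferInstance : Decidable (i.val % 3 = 2))
  set ρ : Fin (3*k) → Fin (3*k) := fun i => ⟨i.val - i.val % 3, by
    have := i.isLt; omega⟩ with hρ
  set A : ℕ → Fin (3*k) := fun j => ⟨(3*j+1) % (3*k), Nat.mod_lt _ (by omega)⟩ with hA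
  set B : ℕ → Fin (3*k) := fun j => ⟨(3*j+3) % (3*k), Nat.mod_lt _ (by omega)⟩ with hB
  have hAval : ∀ j, j < k → (A j).val = 3*j+1 := fun j hj => by
    simp only [hA]
    exact Nat.mod_eq_of_lt (by omega)
  have hBval : ∀ j, j < k → ((B j).val = 3*j+3 ∧ 3*j+3 < 3*k) ∨
      ((B j).val = 0 ∧ 3*j+3 = 3*k) := fun j hj => by
    rcases Nat.lt_or_ge (3*j+3) (3*k) with h | h
    · left
      exact ⟨by simp only [hB]; exact Nat.mod_eq_of_lt h, h⟩
    · right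
      have h3 : 3*j+3 = 3*k := by omega
      exact ⟨by simp only [hB]; rw [h3, Nat.mod_self], h3⟩
  refine master K (cycleGraph (3*k)) S ρ
    (∏ j ∈ Finset.range k, bedge K (A j) (B j)) (2*k) ?_ ?_ ?_ ?_ ?_
  · have h2 : 2*k = ∑ _j ∈ Finset.range k, 2 := by
      simp [Finset.sum_const, Finset.card_range, mul_comm]
    rw [h2]
    exact IsHomogeneous.prod _ _ _ (fun j _ => bedge_hom K _ _)
  · intro i j hadj
    apply phi_bedge_zero
    have h := adj_elim hn2 hadj
    have hi := i.isLt
    have hj := j.isLt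
    simp only [hS, Set.mem_setOf_eq, hρ, Fin.mk.injEq]
    omega
  · intro s hs
    simp only [hS, Set.mem_setOf_eq] at hs
    have hsl := s.isLt
    set j := s.val / 3 with hj
    have hjk : j < k := by omega
    have hsval : s.val = 3*j+2 := by omega
    have hmem : j ∈ Finset.range k := Finset.mem_range.mpr hjk
    have hfac : (∏ j ∈ Finset.range k, bedge K (A j) (B j)) =
        bedge K (A j) (B j) * ∏ l ∈ (Finset.range k).erase j, bedge K (A l) (B l) :=
      (Finset.mul_prod_erase _ _ hmem).symm
    have hadj1 : (cycleGraph (3*k)).Adj (A j) s := by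
      apply adj_of_succ hn2
      rw [hAval j hjk]
      omega
    have hadj2 : (cycleGraph (3*k)).Adj s (B j) := by
      rcases hBval j hjk with ⟨h1, h2⟩ | ⟨h1, h2⟩
      · exact adj_of_succ hn2 (by omega)
      · exact adj_wrap hn2 (by omega) (by omega)
    constructor
    · rw [hfac, ← mul_assoc]
      exact Ideal.mul_mem_right _ _ (path_x K hadj1 hadj2)
    · rw [hfac, ← mul_assoc]
      exact Ideal.mul_mem_right _ _ (path_y K hadj1 hadj2)
  · intro i j hiS hjS hρeq
    simp only [hS, Set.mem_setOf_eq] at hiS hjS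
    have hveq : i.val - i.val % 3 = j.val - j.val % 3 := by
      have := congrArg Fin.val hρeq
      simpa [hρ] using this
    have hi := i.isLt
    have hj := j.isLt
    have htri : i.val = j.val ∨ i.val + 1 = j.val ∨ j.val + 1 = i.val := by omega
    rcases htri with h | h | h
    · rw [Fin.ext h, bedge_self, zero_mul]
      exact Ideal.zero_mem _
    · exact Ideal.mul_mem_right _ _ (bedge_mem K (adj_of_succ hn2 h))
    · rw [bedge_swap, neg_mul]
      exact neg_mem (Ideal.mul_mem_right _ _ (bedge_mem K (adj_of_succ hn2 h)))
  · rw [map_prod]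
    apply Finset.prod_ne_zero_iff.mpr
    intro j hjmem
    have hjk := Finset.mem_range.mp hjmem
    have hAv := hAval j hjk
    have hBv := hBval j hjk
    have hrA : (3*j+1) % (3*k) = 3*j+1 := Nat.mod_eq_of_lt (by omega)
    have hrB : (3*j+3) % (3*k) = 3*j+3 ∨ ((3*j+3) % (3*k) = 0 ∧ 3*j+3 = 3*k) := by
      rcases Nat.lt_or_ge (3*j+3) (3*k) with h | h
      · exact Or.inl (Nat.mod_eq_of_lt h)
      · refine Or.inr ⟨?_, by omega⟩
        have h3 : 3*j+3 = 3*k := by omega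
        rw [h3, Nat.mod_self]
    apply phi_bedge_ne
    · simp only [hS, Set.mem_setOf_eq]
      omega
    · simp only [hS, Set.mem_setOf_eq]
      omega
    · simp only [hρ, ne_eq, Fin.mk.injEq]
      omega

lemma case_r2 (k : ℕ) (hk : 1 ≤ k) :
    vNumber K (beIdeal K (cycleGraph (3*k+2))) ≤ 2*k+2 := by
  have hn2 : 2 ≤ 3*k+2 := by omega
  set S : Set (Fin (3*k+2)) := {i | i.val % 3 = 2 ∨ i.val = 3*k+1} with hS
  letI : DecidablePred (· ∈ S) :=
    fun i => (inferInstance : Decidable (i.val % 3 = 2 ∨ i.val = 3*k+1))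
  set ρ : Fin (3*k+2) → Fin (3*k+2) := fun i => ⟨i.val - i.val % 3, by
    have := i.isLt; omega⟩ with hρ
  set A : ℕ → Fin (3*k+2) := fun j => ⟨(3*j+1) % (3*k+2), Nat.mod_lt _ (by omega)⟩ with hA
  set B : ℕ → Fin (3*k+2) := fun j => ⟨(3*j+3) % (3*k+2), Nat.mod_lt _ (by omega)⟩ with hB
  have hAval : ∀ j, j < k → (A j).val = 3*j+1 := fun j hj => by
    simp only [hA]
    exact Nat.mod_eq_of_lt (by omega)
  have hBval : ∀ j, j < k → (B j).val = 3*j+3 := fun j hj => by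
    simp only [hB]
    exact Nat.mod_eq_of_lt (by omega)
  refine master K (cycleGraph (3*k+2)) S ρ
    ((∏ j ∈ Finset.range k, bedge K (A j) (B j)) *
      bedge K ⟨3*k, by omega⟩ ⟨0, by omega⟩) (2*k+2) ?_ ?_ ?_ ?_ ?_
  · have h2 : 2*k+2 = (∑ _j ∈ Finset.range k, 2) + 2 := by
      simp [Finset.sum_const, Finset.card_range, mul_comm]
    rw [h2]
    exact (IsHomogeneous.prod _ _ _ (fun j _ => bedge_hom K _ _)).mul (bedge_hom K _ _)
  · intro i j hadj
    apply phi_bedge_zero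
    have h := adj_elim hn2 hadj
    have hi := i.isLt
    have hj := j.isLt
    simp only [hS, Set.mem_setOf_eq, hρ, Fin.mk.injEq]
    omega
  · intro s hs
    simp only [hS, Set.mem_setOf_eq] at hs
    have hsl := s.isLt
    rcases (by omega : s.val % 3 = 2 ∧ s.val < 3*k ∨ s.val = 3*k+1) with ⟨hs2, hs3⟩ | hs1
    · set j := s.val / 3 with hj
      have hjk : j < k := by omega
      have hsval : s.val = 3*j+2 := by omega
      have hmem : j ∈ Finset.range k := Finset.mem_range.mpr hjk
      have hfac : (∏ j ∈ Finset.range k, bedge K (A j) (B j)) =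
          bedge K (A j) (B j) * ∏ l ∈ (Finset.range k).erase j, bedge K (A l) (B l) :=
        (Finset.mul_prod_erase _ _ hmem).symm
      have hadj1 : (cycleGraph (3*k+2)).Adj (A j) s := by
        apply adj_of_succ hn2
        rw [hAval j hjk]
        omega
      have hadj2 : (cycleGraph (3*k+2)).Adj s (B j) := by
        apply adj_of_succ hn2
        rw [hBval j hjk]
        omega
      constructor
      · have hre : X (Sum.inl s) * ((∏ j ∈ Finset.range k, bedge K (A j) (B j)) *
            bedge K ⟨3*k, by omega⟩ ⟨0, by omega⟩) =
            (X (Sum.inl s) * bedge K (A j) (B j)) *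
              ((∏ l ∈ (Finset.range k).erase j, bedge K (A l) (B l)) *
                bedge K ⟨3*k, by omega⟩ ⟨0, by omega⟩) := by
          rw [hfac]; ring
        rw [hre]
        exact Ideal.mul_mem_right _ _ (path_x K hadj1 hadj2)
      · have hre : X (Sum.inr s) * ((∏ j ∈ Finset.range k, bedge K (A j) (B j)) *
            bedge K ⟨3*k, by omega⟩ ⟨0, by omega⟩) =
            (X (Sum.inr s) * bedge K (A j) (B j)) *
              ((∏ l ∈ (Finset.range k).erase j, bedge K (A l) (B l)) *
                bedge K ⟨3*k, by omega⟩ ⟨0, by omega⟩) := by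
          rw [hfac]; ring
        rw [hre]
        exact Ideal.mul_mem_right _ _ (path_y K hadj1 hadj2)
    · have hadj1 : (cycleGraph (3*k+2)).Adj ⟨3*k, by omega⟩ s :=
        adj_of_succ hn2 (by simp only []; omega)
      have hadj2 : (cycleGraph (3*k+2)).Adj s ⟨0, by omega⟩ :=
        adj_wrap hn2 (by omega) (by simp only [])
      constructor
      · have hre : X (Sum.inl s) * ((∏ j ∈ Finset.range k, bedge K (A j) (B j)) *
            bedge K ⟨3*k, by omega⟩ ⟨0, by omega⟩) =
            (X (Sum.inl s) * bedge K ⟨3*k, by omega⟩ ⟨0, by omega⟩) *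
              (∏ j ∈ Finset.range k, bedge K (A j) (B j)) := by ring
        rw [hre]
        exact Ideal.mul_mem_right _ _ (path_x K hadj1 hadj2)
      · have hre : X (Sum.inr s) * ((∏ j ∈ Finset.range k, bedge K (A j) (B j)) *
            bedge K ⟨3*k, by omega⟩ ⟨0, by omega⟩) =
            (X (Sum.inr s) * bedge K ⟨3*k, by omega⟩ ⟨0, by omega⟩) *
              (∏ j ∈ Finset.range k, bedge K (A j) (B j)) := by ring
        rw [hre]
        exact Ideal.mul_mem_right _ _ (path_y K hadj1 hadj2)
  · intro i j hiS hjS hρeq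
    simp only [hS, Set.mem_setOf_eq] at hiS hjS
    push_neg at hiS hjS
    have hveq : i.val - i.val % 3 = j.val - j.val % 3 := by
      have := congrArg Fin.val hρeq
      simpa [hρ] using this
    have hi := i.isLt
    have hj := j.isLt
    have htri : i.val = j.val ∨ i.val + 1 = j.val ∨ j.val + 1 = i.val := by omega
    rcases htri with h | h | h
    · rw [Fin.ext h, bedge_self, zero_mul]
      exact Ideal.zero_mem _
    · exact Ideal.mul_mem_right _ _ (bedge_mem K (adj_of_succ hn2 h))
    · rw [bedge_swap, neg_mul]
      exact neg_mem (Ideal.mul_mem_right _ _ (bedge_mem K (adj_of_succ hn2 h)))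
  · rw [map_mul, map_prod]
    apply mul_ne_zero
    · apply Finset.prod_ne_zero_iff.mpr
      intro j hjmem
      have hjk := Finset.mem_range.mp hjmem
      have hrA : (3*j+1) % (3*k+2) = 3*j+1 := Nat.mod_eq_of_lt (by omega)
      have hrB : (3*j+3) % (3*k+2) = 3*j+3 := Nat.mod_eq_of_lt (by omega)
      have hAv := hAval j hjk
      have hBv := hBval j hjk
      apply phi_bedge_ne
      · simp only [hS, Set.mem_setOf_eq]
        omega
      · simp only [hS, Set.mem_setOf_eq]
        omega
      · simp only [hρ, ne_eq, Fin.mk.injEq]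
        omega
    · apply phi_bedge_ne
      · simp only [hS, Set.mem_setOf_eq]
        omega
      · simp only [hS, Set.mem_setOf_eq]
        omega
      · simp only [hρ, ne_eq, Fin.mk.injEq]
        omega

lemma case_r1 (k : ℕ) (hk : 2 ≤ k) :
    vNumber K (beIdeal K (cycleGraph (3*k+1))) ≤ 2*k+1 := by
  have hn2 : 2 ≤ 3*k+1 := by omega
  set S : Set (Fin (3*k+1)) := {i | i.val % 3 = 2} with hS
  letI : DecidablePred (· ∈ S) := fun i => (inferInstance : Decidable (i.val % 3 = 2))
  set ρ : Fin (3*k+1) → Fin (3*k+1) := fun i =>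
    ⟨if i.val = 3*k then 0 else i.val - i.val % 3, by
      have := i.isLt; split <;> omega⟩ with hρ
  set A : ℕ → Fin (3*k+1) := fun j => ⟨(3*j+1) % (3*k+1), Nat.mod_lt _ (by omega)⟩ with hA
  set B : ℕ → Fin (3*k+1) := fun j => ⟨(3*j+3) % (3*k+1), Nat.mod_lt _ (by omega)⟩ with hB
  have hAval : ∀ j, j < k → (A j).val = 3*j+1 := fun j hj => by
    simp only [hA]
    exact Nat.mod_eq_of_lt (by omega)
  have hBval : ∀ j, j < k → (B j).val = 3*j+3 := fun j hj => by
    simp only [hB]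
    exact Nat.mod_eq_of_lt (by omega)
  refine master K (cycleGraph (3*k+1)) S ρ
    (X (Sum.inl ⟨0, by omega⟩) * ∏ j ∈ Finset.range k, bedge K (A j) (B j)) (2*k+1) ?_ ?_ ?_ ?_ ?_
  · have h2 : 2*k+1 = 1 + ∑ _j ∈ Finset.range k, 2 := by
      simp [Finset.sum_const, Finset.card_range, mul_comm]
      omega
    rw [h2]
    exact (isHomogeneous_X K _).mul (IsHomogeneous.prod _ _ _ (fun j _ => bedge_hom K _ _))
  · intro i j hadj
    apply phi_bedge_zero
    have h := adj_elim hn2 hadj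
    have hi := i.isLt
    have hj := j.isLt
    simp only [hS, Set.mem_setOf_eq, hρ, Fin.mk.injEq]
    split_ifs <;> omega
  · intro s hs
    simp only [hS, Set.mem_setOf_eq] at hs
    have hsl := s.isLt
    set j := s.val / 3 with hj
    have hjk : j < k := by omega
    have hsval : s.val = 3*j+2 := by omega
    have hmem : j ∈ Finset.range k := Finset.mem_range.mpr hjk
    have hfac : (∏ j ∈ Finset.range k, bedge K (A j) (B j)) =
        bedge K (A j) (B j) * ∏ l ∈ (Finset.range k).erase j, bedge K (A l) (B l) :=
      (Finset.mul_prod_erase _ _ hmem).symm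
    have hadj1 : (cycleGraph (3*k+1)).Adj (A j) s := by
      apply adj_of_succ hn2
      rw [hAval j hjk]
      omega
    have hadj2 : (cycleGraph (3*k+1)).Adj s (B j) := by
      apply adj_of_succ hn2
      rw [hBval j hjk]
      omega
    constructor
    · have hre : X (Sum.inl s) * (X (Sum.inl ⟨0, by omega⟩) *
          ∏ j ∈ Finset.range k, bedge K (A j) (B j)) =
          (X (Sum.inl s) * bedge K (A j) (B j)) *
            (X (Sum.inl ⟨0, by omega⟩) *
              ∏ l ∈ (Finset.range k).erase j, bedge K (A l) (B l)) := by
        rw [hfac]; ring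
      rw [hre]
      exact Ideal.mul_mem_right _ _ (path_x K hadj1 hadj2)
    · have hre : X (Sum.inr s) * (X (Sum.inl ⟨0, by omega⟩) *
          ∏ j ∈ Finset.range k, bedge K (A j) (B j)) =
          (X (Sum.inr s) * bedge K (A j) (B j)) *
            (X (Sum.inl ⟨0, by omega⟩) *
              ∏ l ∈ (Finset.range k).erase j, bedge K (A l) (B l)) := by
        rw [hfac]; ring
      rw [hre]
      exact Ideal.mul_mem_right _ _ (path_y K hadj1 hadj2)
  · intro i j hiS hjS hρeq
    simp only [hS, Set.mem_setOf_eq] at hiS hjS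
    have hi := i.isLt
    have hj := j.isLt
    have hd : i.val = j.val ∨ (i.val + 1 = j.val) ∨ (j.val + 1 = i.val) ∨
        (i.val = 3*k ∧ j.val = 0) ∨ (j.val = 3*k ∧ i.val = 0) ∨
        (i.val = 3*k ∧ j.val = 1) ∨ (j.val = 3*k ∧ i.val = 1) := by
      have hveq := congrArg Fin.val hρeq
      simp only [hρ] at hveq
      split_ifs at hveq <;> omega
    have hwadj : ∀ u v : Fin (3*k+1), u.val = 3*k → v.val = 0 →
        (cycleGraph (3*k+1)).Adj u v := fun u v hu hv => adj_wrap hn2 (by omega) hv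
    rcases hd with h | h | h | ⟨h1, h2⟩ | ⟨h1, h2⟩ | ⟨h1, h2⟩ | ⟨h1, h2⟩
    · rw [Fin.ext h, bedge_self, zero_mul]
      exact Ideal.zero_mem _
    · exact Ideal.mul_mem_right _ _ (bedge_mem K (adj_of_succ hn2 h))
    · rw [bedge_swap, neg_mul]
      exact neg_mem (Ideal.mul_mem_right _ _ (bedge_mem K (adj_of_succ hn2 h)))
    · exact Ideal.mul_mem_right _ _ (bedge_mem K (hwadj i j h1 h2))
    · exact Ideal.mul_mem_right _ _ (bedge_mem K ((hwadj j i h1 h2).symm))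
    · -- i = 3k, j = 1 : use the x_0 factor
      have hadj1 : (cycleGraph (3*k+1)).Adj i ⟨0, by omega⟩ := hwadj i _ h1 rfl
      have hadj2 : (cycleGraph (3*k+1)).Adj ⟨0, by omega⟩ j :=
        adj_of_succ hn2 (by simp only []; omega)
      have hre : bedge K i j * (X (Sum.inl ⟨0, by omega⟩) *
          ∏ j ∈ Finset.range k, bedge K (A j) (B j)) =
          (X (Sum.inl ⟨0, by omega⟩) * bedge K i j) *
            ∏ j ∈ Finset.range k, bedge K (A j) (B j) := by ring
      rw [hre]
      exact Ideal.mul_mem_right _ _ (path_x K hadj1 hadj2)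
    · have hadj1 : (cycleGraph (3*k+1)).Adj j ⟨0, by omega⟩ := hwadj j _ h1 rfl
      have hadj2 : (cycleGraph (3*k+1)).Adj ⟨0, by omega⟩ i :=
        adj_of_succ hn2 (by simp only []; omega)
      have hre : bedge K i j * (X (Sum.inl ⟨0, by omega⟩) *
          ∏ j ∈ Finset.range k, bedge K (A j) (B j)) =
          (-(X (Sum.inl ⟨0, by omega⟩) * bedge K j i)) *
            ∏ j ∈ Finset.range k, bedge K (A j) (B j) := by
        rw [bedge_swap K i j]; ring
      rw [hre, neg_mul]
      exact neg_mem (Ideal.mul_mem_right _ _ (path_x K hadj1 hadj2))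
  · rw [map_mul, map_prod]
    apply mul_ne_zero
    · apply phi_X_ne
      simp only [hS, Set.mem_setOf_eq]
      omega
    · apply Finset.prod_ne_zero_iff.mpr
      intro j hjmem
      have hjk := Finset.mem_range.mp hjmem
      have hrA : (3*j+1) % (3*k+1) = 3*j+1 := Nat.mod_eq_of_lt (by omega)
      have hrB : (3*j+3) % (3*k+1) = 3*j+3 := Nat.mod_eq_of_lt (by omega)
      have hAv := hAval j hjk
      have hBv := hBval j hjk
      apply phi_bedge_ne
      · simp only [hS, Set.mem_setOf_eq]
        omega
      · simp only [hS, Set.mem_setOf_eq]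
        omega
      · simp only [hρ, ne_eq, Fin.mk.injEq]
        split_ifs <;> omega

end Cases

theorem statement_13' {n : ℕ} (hn : 1 ≤ n) :
    vNumber K (beIdeal K (SimpleGraph.cycleGraph n)) ≤ (2 * n + 2) / 3 := by
  rcases (by omega : n = 1 ∨ n = 2 ∨ n = 3 ∨ n = 4 ∨ 5 ≤ n) with h | h | h | h | h
  · subst h
    exact le_trans (case_small K (by omega) (by decide)) (Nat.zero_le _)
  · subst h
    exact le_trans (case_small K (by omega) (by decide)) (Nat.zero_le _)
  · subst h
    exact le_trans (case_small K (by omega) (by decide)) (Nat.zero_le _)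
  · subst h
    exact le_trans (case_four K) (by norm_num)
  · have h3 : n % 3 = 0 ∨ n % 3 = 1 ∨ n % 3 = 2 := by omega
    rcases h3 with h3 | h3 | h3
    · have hn3 : n = 3*(n/3) := by omega
      have hk : 2 ≤ n/3 := by omega
      rw [hn3]
      exact le_trans (case_r0 K (n/3) hk) (by omega)
    · have hn3 : n = 3*(n/3)+1 := by omega
      have hk : 2 ≤ n/3 := by omega
      rw [hn3]
      exact le_trans (case_r1 K (n/3) hk) (by omega)
    · have hn3 : n = 3*(n/3)+2 := by omega
      have hk : 1 ≤ n/3 := by omega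
      rw [hn3]
      exact le_trans (case_r2 K (n/3) hk) (by omega)

end Aux

end
end Paper

namespace Paper

variable (K : Type) [Field K]

theorem statement_13 {n : ℕ} (hn : 1 ≤ n) :
    vNumber K (beIdeal K (SimpleGraph.cycleGraph n)) ≤ (2 * n + 2) / 3 := by
  exact Aux.statement_13' K hn

end Paper
end
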